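/- arXiv:1405.1601 — 7 statements merged into one kernel-verified Lean document; each statement's English description precedes it below -/
import Mathlib

section
/- For max{k, 2} ≤ m ≤ ⌊n/2⌋ and k ≥ 1, the graph K^k_{n-m,m} has edge connectivity exactly k. -/
/-- `matchCount G t` is the number of `t`-matchings of `G`, i.e. the number of
`t`-element sets of pairwise disjoint edges of `G`. -/
noncomputable def matchCount {V : Type*} (G : SimpleGraph V) (t : ℕ) : ℕ :=
  Nat.card {s : Finset (Sym2 V) // ↑s ⊆ G.edgeSet ∧ s.card = t ∧
    (s : Set (Sym2 V)).Pairwise fun e f => ∀ v, ¬(v ∈ e ∧ v ∈ f)}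

/-- The edge connectivity of a graph: the minimum number of edges whose
deletion disconnects the graph. -/
noncomputable def edgeConn {V : Type*} (G : SimpleGraph V) : ℕ :=
  sInf {j | ∃ F : Set (Sym2 V), F ⊆ G.edgeSet ∧ F.ncard = j ∧ ¬(G.deleteEdges F).Connected}

/-- The edge cut `∂(S)`: the set of edges of `G` with exactly one endpoint in `S`. -/
def edgeCut {V : Type*} (G : SimpleGraph V) (S : Set V) : Set (Sym2 V) :=
  {e | e ∈ G.edgeSet ∧ ∃ u ∈ S, ∃ v, v ∉ S ∧ e = s(u, v)}

/-- `Kstar n k` is the graph `K^k_{n-1,1}`: obtained from `K_1 ∪ K_{n-1}` by adding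
`k` edges joining the vertex of `K_1` (vertex `n-1`) to `k` distinct vertices of `K_{n-1}`. -/
def Kstar (n k : ℕ) : SimpleGraph (Fin n) :=
  SimpleGraph.fromRel (fun u v =>
    (u.val < n - 1 ∧ v.val < n - 1) ∨ (u.val < k ∧ v.val = n - 1))

/-- `Kmk n m k` is the graph `K^k_{n-m,m}`: obtained from `K_{n-m} ∪ K_m` by adding
`k` independent edges between the two parts. -/
def Kmk (n m k : ℕ) : SimpleGraph (Fin n) :=
  SimpleGraph.fromRel (fun u v =>
    (u.val < n - m ∧ v.val < n - m) ∨ (n - m ≤ u.val ∧ n - m ≤ v.val) ∨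
    (u.val < k ∧ v.val = n - m + u.val))

/-- The Hosoya index: the total number of matchings of `G`. -/
noncomputable def hosoya {V : Type*} [Fintype V] (G : SimpleGraph V) : ℕ :=
  ∑ t ∈ Finset.range (Fintype.card V / 2 + 1), matchCount G t


lemma kmk_adj (n m k : ℕ) (u v : Fin n) : (Kmk n m k).Adj u v ↔ u ≠ v ∧
    (((u.val < n - m ∧ v.val < n - m) ∨ (n - m ≤ u.val ∧ n - m ≤ v.val) ∨
      (u.val < k ∧ v.val = n - m + u.val)) ∨
     ((v.val < n - m ∧ u.val < n - m) ∨ (n - m ≤ v.val ∧ n - m ≤ u.val) ∨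
      (v.val < k ∧ u.val = n - m + v.val))) := by
  simp [Kmk, SimpleGraph.fromRel_adj]

lemma part1 (n m k : ℕ) (hk : 1 ≤ k) (hkm : k ≤ m) (h2m : 2 ≤ m) (hmn : 2*m ≤ n) : ∃ F : Set (Sym2 (Fin n)), F ⊆ (Kmk n m k).edgeSet ∧ F.ncard = k ∧
    ¬((Kmk n m k).deleteEdges F).Connected := by
  have hn : 0 < n := by omega
  set p : ℕ → Fin n := fun i => ⟨i % n, Nat.mod_lt i hn⟩ with hp
  have hpval : ∀ i, i < n → (p i).val = i := fun i hi => Nat.mod_eq_of_lt hi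
  set f : ℕ → Sym2 (Fin n) := fun u => s(p u, p (n - m + u)) with hf
  set Fs : Finset (Sym2 (Fin n)) := (Finset.range k).image f with hFs
  -- basic bounds
  have hb : ∀ u, u < k → u < n ∧ n - m + u < n ∧ u < n - m := by intro u hu; omega
  have hmem : ∀ u, u < k → f u ∈ (Kmk n m k).edgeSet := by
    intro u hu
    obtain ⟨h1, h2, h3⟩ := hb u hu
    rw [SimpleGraph.mem_edgeSet, kmk_adj]
    constructor
    · intro he
      have := congrArg Fin.val he
      rw [hpval u h1, hpval _ h2] at this
      omega
    · left; right; right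
      rw [hpval u h1, hpval _ h2]
      omega
  refine ⟨↑Fs, ?_, ?_, ?_⟩
  · intro e he
    simp only [hFs, Finset.coe_image, Set.mem_image, Finset.mem_coe, Finset.mem_range] at he
    obtain ⟨u, hu, rfl⟩ := he
    exact hmem u hu
  · rw [Set.ncard_coe_finset, hFs, Finset.card_image_of_injOn, Finset.card_range]
    intro u hu u' hu' he
    simp only [Finset.coe_range, Set.mem_Iio] at hu hu'
    obtain ⟨h1, h2, h3⟩ := hb u hu
    obtain ⟨h1', h2', h3'⟩ := hb u' hu'
    rw [hf] at he
    simp only [Sym2.eq, Sym2.rel_iff', Prod.mk.injEq, Prod.swap_prod_mk] at he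
    rcases he with ⟨ha, _⟩ | ⟨ha, hb'⟩
    · have := congrArg Fin.val ha; rw [hpval u h1, hpval u' h1'] at this; omega
    · have := congrArg Fin.val ha; rw [hpval u h1, hpval _ h2'] at this; omega
  · intro hc
    have key : ∀ z w : Fin n, ((Kmk n m k).deleteEdges ↑Fs).Walk z w →
        z.val < n - m → w.val < n - m := by
      intro z w wk
      induction wk with
      | nil => exact fun h => h
      | cons ha wk ih =>
        rename_i z₁ z₂ w₁
        intro hz
        apply ih
        rw [SimpleGraph.deleteEdges_adj] at ha
        obtain ⟨hadj, hne⟩ := ha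
        by_contra hz2
        push_neg at hz2
        rw [kmk_adj] at hadj
        have hcross : z₁.val < k ∧ z₂.val = n - m + z₁.val := by
          rcases hadj.2 with (h | h | h) | (h | h | h) <;> omega
        apply hne
        simp only [hFs, Finset.coe_image, Set.mem_image, Finset.mem_coe, Finset.mem_range]
        refine ⟨z₁.val, hcross.1, ?_⟩
        obtain ⟨h1, h2, h3⟩ := hb z₁.val hcross.1
        have e1 : p z₁.val = z₁ := Fin.ext (hpval _ h1)
        have e2 : p (n - m + z₁.val) = z₂ := Fin.ext (by rw [hpval _ h2]; omega)
        rw [hf]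
        simp only [e1, e2]
    have hreach := hc.preconnected (p 0) (p (n-1))
    obtain ⟨wk⟩ := hreach
    have h0 : (p 0).val < n - m := by rw [hpval 0 (by omega)]; omega
    have h1 : ¬ (p (n-1)).val < n - m := by rw [hpval (n-1) (by omega)]; omega
    exact h1 (key _ _ wk h0)


lemma aux_min (a b a' b' : ℕ) (h1 : 1 ≤ a + b) (h2 : 1 ≤ a' + b') :
    min a b + min a' b' ≤ a * a' + b * b' := by
  rcases Nat.eq_zero_or_pos b with hb | hb
  · subst hb
    have ha : 1 ≤ a := by omega
    have : min a' b' ≤ a * a' := by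
      calc min a' b' ≤ a' := min_le_left _ _
        _ ≤ a * a' := Nat.le_mul_of_pos_left _ ha
    omega
  rcases Nat.eq_zero_or_pos a' with ha' | ha'
  · subst ha'
    have hb' : 1 ≤ b' := by omega
    have : min a b ≤ b * b' := by
      calc min a b ≤ b := min_le_right _ _
        _ ≤ b * b' := Nat.le_mul_of_pos_right _ hb'
    omega
  · have h3 : a ≤ a * a' := Nat.le_mul_of_pos_right _ ha'
    have h4 : b' ≤ b * b' := Nat.le_mul_of_pos_left _ hb
    have := min_le_left a b
    have := min_le_right a' b'
    omega

lemma part2 (n m k : ℕ) (hk : 1 ≤ k) (hkm : k ≤ m) (h2m : 2 ≤ m) (hmn : 2*m ≤ n)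
    (F : Set (Sym2 (Fin n))) (hFsub : F ⊆ (Kmk n m k).edgeSet)
    (hdis : ¬((Kmk n m k).deleteEdges F).Connected) : k ≤ F.ncard := by
  classical
  by_contra hcon
  push_neg at hcon
  have hn : 0 < n := by omega
  set G' := (Kmk n m k).deleteEdges F with hG'
  have hne : Nonempty (Fin n) := ⟨⟨0, hn⟩⟩
  rw [SimpleGraph.connected_iff] at hdis
  push_neg at hdis
  have hpre : ¬ G'.Preconnected := fun h => (hdis h).false ⟨0, hn⟩
  rw [SimpleGraph.Preconnected] at hpre
  push_neg at hpre
  obtain ⟨x, y, hxy⟩ := hpre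
  set S : Finset (Fin n) := Finset.univ.filter (fun v => G'.Reachable x v) with hS
  have hxS : x ∈ S := by simp only [hS, Finset.mem_filter, Finset.mem_univ, true_and]; exact SimpleGraph.Reachable.refl x
  have hyS : y ∉ S := by simp [hS, hxy]
  have hclose : ∀ u v : Fin n, u ∈ S → v ∉ S → (Kmk n m k).Adj u v → s(u, v) ∈ F := by
    intro u v hu hv hadj
    by_contra hF
    apply hv
    simp only [hS, Finset.mem_filter, Finset.mem_univ, true_and] at hu ⊢
    exact hu.trans ⟨SimpleGraph.Walk.cons (by rw [SimpleGraph.deleteEdges_adj]; exact ⟨hadj, hF⟩) SimpleGraph.Walk.nil⟩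
  -- vertex construction
  set p : ℕ → Fin n := fun i => ⟨i % n, Nat.mod_lt i hn⟩ with hp
  have hpval : ∀ i, i < n → (p i).val = i := fun i hi => Nat.mod_eq_of_lt hi
  have hb : ∀ u, u < k → u < n ∧ n - m + u < n ∧ u < n - m ∧ n - m ≤ n - m + u := by
    intro u hu; omega
  -- the four corner sets
  set SA := S.filter (fun v => v.val < n - m) with hSA
  set SA' := Sᶜ.filter (fun v => v.val < n - m) with hSA'
  set SB := S.filter (fun v => ¬ v.val < n - m) with hSB
  set SB' := Sᶜ.filter (fun v => ¬ v.val < n - m) with hSB'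
  -- matching index sets
  set BI := (Finset.range k).filter (fun u => p u ∈ S ∧ p (n - m + u) ∈ S) with hBI
  set BO := (Finset.range k).filter (fun u => p u ∉ S ∧ p (n - m + u) ∉ S) with hBO
  set CM := (Finset.range k).filter
    (fun u => ¬((p u ∈ S ∧ p (n - m + u) ∈ S) ∨ (p u ∉ S ∧ p (n - m + u) ∉ S))) with hCM
  have hsplit : BI.card + BO.card + CM.card = k := by
    have h1 := Finset.card_filter_add_card_filter_not (s := Finset.range k)
      (p := fun u => (p u ∈ S ∧ p (n - m + u) ∈ S) ∨ (p u ∉ S ∧ p (n - m + u) ∉ S))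
    rw [Finset.filter_or] at h1
    rw [Finset.card_union_of_disjoint] at h1
    · rw [hBI, hBO, hCM]
      rw [Finset.card_range] at h1
      omega
    · rw [Finset.disjoint_left]
      intro u hu hu'
      simp only [Finset.mem_filter] at hu hu'
      tauto
  have hinjp : ∀ u ∈ Finset.range k, ∀ u' ∈ Finset.range k, p u = p u' → u = u' := by
    intro u hu u' hu' h
    rw [Finset.mem_range] at hu hu'
    have := congrArg Fin.val h
    rw [hpval u (hb u hu).1, hpval u' (hb u' hu').1] at this
    exact this
  have hinjq : ∀ u ∈ Finset.range k, ∀ u' ∈ Finset.range k,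
      p (n - m + u) = p (n - m + u') → u = u' := by
    intro u hu u' hu' h
    rw [Finset.mem_range] at hu hu'
    have := congrArg Fin.val h
    rw [hpval _ (hb u hu).2.1, hpval _ (hb u' hu').2.1] at this
    omega
  have hBIa : BI.card ≤ SA.card := by
    apply Finset.card_le_card_of_injOn (fun u => p u)
    · intro u hu
      rw [hBI, Finset.mem_coe, Finset.mem_filter, Finset.mem_range] at hu
      rw [hSA, Finset.mem_coe, Finset.mem_filter]
      exact ⟨hu.2.1, by rw [hpval u (hb u hu.1).1]; exact (hb u hu.1).2.2.1⟩
    · intro u hu u' hu' h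
      rw [hBI] at hu hu'
      exact hinjp u (Finset.mem_of_mem_filter _ hu) u' (Finset.mem_of_mem_filter _ hu') h
  have hBIb : BI.card ≤ SB.card := by
    apply Finset.card_le_card_of_injOn (fun u => p (n - m + u))
    · intro u hu
      rw [hBI, Finset.mem_coe, Finset.mem_filter, Finset.mem_range] at hu
      rw [hSB, Finset.mem_coe, Finset.mem_filter]
      exact ⟨hu.2.2, by rw [hpval _ (hb u hu.1).2.1]; omega⟩
    · intro u hu u' hu' h
      rw [hBI] at hu hu'
      exact hinjq u (Finset.mem_of_mem_filter _ hu) u' (Finset.mem_of_mem_filter _ hu') h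
  have hBOa : BO.card ≤ SA'.card := by
    apply Finset.card_le_card_of_injOn (fun u => p u)
    · intro u hu
      rw [hBO, Finset.mem_coe, Finset.mem_filter, Finset.mem_range] at hu
      rw [hSA', Finset.mem_coe, Finset.mem_filter, Finset.mem_compl]
      exact ⟨hu.2.1, by rw [hpval u (hb u hu.1).1]; exact (hb u hu.1).2.2.1⟩
    · intro u hu u' hu' h
      rw [hBO] at hu hu'
      exact hinjp u (Finset.mem_of_mem_filter _ hu) u' (Finset.mem_of_mem_filter _ hu') h
  have hBOb : BO.card ≤ SB'.card := by
    apply Finset.card_le_card_of_injOn (fun u => p (n - m + u))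
    · intro u hu
      rw [hBO, Finset.mem_coe, Finset.mem_filter, Finset.mem_range] at hu
      rw [hSB', Finset.mem_coe, Finset.mem_filter, Finset.mem_compl]
      exact ⟨hu.2.2, by rw [hpval _ (hb u hu.1).2.1]; omega⟩
    · intro u hu u' hu' h
      rw [hBO] at hu hu'
      exact hinjq u (Finset.mem_of_mem_filter _ hu) u' (Finset.mem_of_mem_filter _ hu') h
  -- the cut pieces
  set TA := (SA ×ˢ SA').image (fun q => s(q.1, q.2)) with hTA
  set TB := (SB ×ˢ SB').image (fun q => s(q.1, q.2)) with hTB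
  set TC := CM.image (fun u => s(p u, p (n - m + u))) with hTC
  have memSA : ∀ v, v ∈ SA → v ∈ S ∧ v.val < n - m := by
    intro v hv; rw [hSA, Finset.mem_filter] at hv; exact hv
  have memSA' : ∀ v, v ∈ SA' → v ∉ S ∧ v.val < n - m := by
    intro v hv; rw [hSA', Finset.mem_filter, Finset.mem_compl] at hv; exact hv
  have memSB : ∀ v, v ∈ SB → v ∈ S ∧ n - m ≤ v.val := by
    intro v hv; rw [hSB, Finset.mem_filter] at hv; exact ⟨hv.1, by omega⟩
  have memSB' : ∀ v, v ∈ SB' → v ∉ S ∧ n - m ≤ v.val := by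
    intro v hv; rw [hSB', Finset.mem_filter, Finset.mem_compl] at hv; exact ⟨hv.1, by omega⟩
  -- cardinalities of the pieces
  have cardTA : TA.card = SA.card * SA'.card := by
    rw [hTA, Finset.card_image_of_injOn, Finset.card_product]
    intro q hq q' hq' he
    simp only [Finset.coe_product, Set.mem_prod, Finset.mem_coe] at hq hq'
    simp only [Sym2.eq, Sym2.rel_iff', Prod.mk.injEq, Prod.swap_prod_mk] at he
    rcases he with ⟨h1, h2⟩ | ⟨h1, h2⟩
    · exact Prod.ext h1 h2
    · exact absurd ((memSA _ hq.1).1) (by rw [h1]; exact (memSA' _ hq'.2).1)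
  have cardTB : TB.card = SB.card * SB'.card := by
    rw [hTB, Finset.card_image_of_injOn, Finset.card_product]
    intro q hq q' hq' he
    simp only [Finset.coe_product, Set.mem_prod, Finset.mem_coe] at hq hq'
    simp only [Sym2.eq, Sym2.rel_iff', Prod.mk.injEq, Prod.swap_prod_mk] at he
    rcases he with ⟨h1, h2⟩ | ⟨h1, h2⟩
    · exact Prod.ext h1 h2
    · exact absurd ((memSB _ hq.1).1) (by rw [h1]; exact (memSB' _ hq'.2).1)
  have cardTC : TC.card = CM.card := by
    rw [hTC, Finset.card_image_of_injOn]
    intro u hu u' hu' he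
    have hu1 : u ∈ Finset.range k := Finset.mem_of_mem_filter _ hu
    have hu2 : u' ∈ Finset.range k := Finset.mem_of_mem_filter _ hu'
    rw [Finset.mem_range] at hu1 hu2
    simp only [Sym2.eq, Sym2.rel_iff', Prod.mk.injEq, Prod.swap_prod_mk] at he
    rcases he with ⟨h1, h2⟩ | ⟨h1, h2⟩
    · have := congrArg Fin.val h1
      rw [hpval u (hb u hu1).1, hpval u' (hb u' hu2).1] at this
      exact this
    · have := congrArg Fin.val h1
      rw [hpval u (hb u hu1).1, hpval _ (hb u' hu2).2.1] at this
      omega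
  -- endpoint descriptions
  have endTA : ∀ e ∈ TA, ∃ v1 v2 : Fin n,
      e = s(v1, v2) ∧ v1 ∈ S ∧ v2 ∉ S ∧ v1.val < n - m ∧ v2.val < n - m := by
    intro e he
    rw [hTA, Finset.mem_image] at he
    obtain ⟨q, hq, rfl⟩ := he
    rw [Finset.mem_product] at hq
    exact ⟨q.1, q.2, rfl, (memSA _ hq.1).1, (memSA' _ hq.2).1, (memSA _ hq.1).2, (memSA' _ hq.2).2⟩
  have endTB : ∀ e ∈ TB, ∃ v1 v2 : Fin n,
      e = s(v1, v2) ∧ v1 ∈ S ∧ v2 ∉ S ∧ n - m ≤ v1.val ∧ n - m ≤ v2.val := by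
    intro e he
    rw [hTB, Finset.mem_image] at he
    obtain ⟨q, hq, rfl⟩ := he
    rw [Finset.mem_product] at hq
    exact ⟨q.1, q.2, rfl, (memSB _ hq.1).1, (memSB' _ hq.2).1, (memSB _ hq.1).2, (memSB' _ hq.2).2⟩
  have endTC : ∀ e ∈ TC, ∃ v1 v2 : Fin n,
      e = s(v1, v2) ∧ v1.val < n - m ∧ n - m ≤ v2.val := by
    intro e he
    rw [hTC, Finset.mem_image] at he
    obtain ⟨u, hu, rfl⟩ := he
    have hu1 : u < k := Finset.mem_range.mp (Finset.mem_of_mem_filter _ hu)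
    refine ⟨p u, p (n - m + u), rfl, ?_, ?_⟩
    · rw [hpval u (hb u hu1).1]; exact (hb u hu1).2.2.1
    · rw [hpval _ (hb u hu1).2.1]; exact (hb u hu1).2.2.2
  -- disjointness
  have dAB : Disjoint TA TB := by
    rw [Finset.disjoint_left]
    intro e h1 h2
    obtain ⟨v1, v2, he, _, _, hv1, hv2⟩ := endTA e h1
    obtain ⟨w1, w2, he', _, _, hw1, hw2⟩ := endTB e h2
    rw [he] at he'
    simp only [Sym2.eq, Sym2.rel_iff', Prod.mk.injEq, Prod.swap_prod_mk] at he'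
    rcases he' with ⟨h, _⟩ | ⟨h, _⟩ <;> (rw [h] at hv1; omega)
  have dAC : Disjoint TA TC := by
    rw [Finset.disjoint_left]
    intro e h1 h2
    obtain ⟨v1, v2, he, _, _, hv1, hv2⟩ := endTA e h1
    obtain ⟨w1, w2, he', hw1, hw2⟩ := endTC e h2
    rw [he] at he'
    simp only [Sym2.eq, Sym2.rel_iff', Prod.mk.injEq, Prod.swap_prod_mk] at he'
    rcases he' with ⟨_, h⟩ | ⟨h, _⟩ <;> (rw [← h] at hw2; omega)
  have dBC : Disjoint TB TC := by
    rw [Finset.disjoint_left]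
    intro e h1 h2
    obtain ⟨v1, v2, he, _, _, hv1, hv2⟩ := endTB e h1
    obtain ⟨w1, w2, he', hw1, hw2⟩ := endTC e h2
    rw [he] at he'
    simp only [Sym2.eq, Sym2.rel_iff', Prod.mk.injEq, Prod.swap_prod_mk] at he'
    rcases he' with ⟨h, _⟩ | ⟨_, h⟩ <;> (rw [← h] at hw1; omega)
  have hTcard : (TA ∪ TB ∪ TC).card = SA.card * SA'.card + SB.card * SB'.card + CM.card := by
    rw [Finset.card_union_of_disjoint, Finset.card_union_of_disjoint dAB,
      cardTA, cardTB, cardTC]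
    rw [Finset.disjoint_union_left]
    exact ⟨dAC, dBC⟩
  -- the cut is contained in F
  have hsubF : ∀ e ∈ TA ∪ TB ∪ TC, e ∈ F := by
    intro e he
    rw [Finset.mem_union, Finset.mem_union] at he
    rcases he with (h | h) | h
    · obtain ⟨v1, v2, rfl, hv1S, hv2S, hv1, hv2⟩ := endTA e h
      refine hclose v1 v2 hv1S hv2S ?_
      rw [kmk_adj]
      exact ⟨fun hh => hv2S (hh ▸ hv1S), Or.inl (Or.inl ⟨hv1, hv2⟩)⟩
    · obtain ⟨v1, v2, rfl, hv1S, hv2S, hv1, hv2⟩ := endTB e h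
      refine hclose v1 v2 hv1S hv2S ?_
      rw [kmk_adj]
      exact ⟨fun hh => hv2S (hh ▸ hv1S), Or.inl (Or.inr (Or.inl ⟨hv1, hv2⟩))⟩
    · rw [hTC, Finset.mem_image] at h
      obtain ⟨u, hu, rfl⟩ := h
      rw [hCM, Finset.mem_filter, Finset.mem_range] at hu
      obtain ⟨hu1, hu2⟩ := hu
      have hadj : (Kmk n m k).Adj (p u) (p (n - m + u)) := by
        rw [kmk_adj]
        constructor
        · intro hh
          have := congrArg Fin.val hh
          rw [hpval u (hb u hu1).1, hpval _ (hb u hu1).2.1] at this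
          omega
        · left; right; right
          rw [hpval u (hb u hu1).1, hpval _ (hb u hu1).2.1]
          omega
      by_cases hx1 : p u ∈ S <;> by_cases hx2 : p (n - m + u) ∈ S
      · exact absurd (Or.inl ⟨hx1, hx2⟩) hu2
      · exact hclose _ _ hx1 hx2 hadj
      · rw [Sym2.eq_swap]
        exact hclose _ _ hx2 hx1 hadj.symm
      · exact absurd (Or.inr ⟨hx1, hx2⟩) hu2
  have hle : (TA ∪ TB ∪ TC).card ≤ F.ncard := by
    rw [Set.ncard_eq_toFinset_card']
    apply Finset.card_le_card
    intro e he
    rw [Set.mem_toFinset]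
    exact hsubF e he
  -- nonemptiness
  have hab1 : 1 ≤ SA.card + SB.card := by
    by_cases hx : x.val < n - m
    · have : x ∈ SA := by rw [hSA, Finset.mem_filter]; exact ⟨hxS, hx⟩
      have := Finset.card_pos.mpr ⟨x, this⟩
      omega
    · have : x ∈ SB := by rw [hSB, Finset.mem_filter]; exact ⟨hxS, hx⟩
      have := Finset.card_pos.mpr ⟨x, this⟩
      omega
  have hab2 : 1 ≤ SA'.card + SB'.card := by
    by_cases hy : y.val < n - m
    · have : y ∈ SA' := by rw [hSA', Finset.mem_filter, Finset.mem_compl]; exact ⟨hyS, hy⟩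
      have := Finset.card_pos.mpr ⟨y, this⟩
      omega
    · have : y ∈ SB' := by rw [hSB', Finset.mem_filter, Finset.mem_compl]; exact ⟨hyS, hy⟩
      have := Finset.card_pos.mpr ⟨y, this⟩
      omega
  have hmin := aux_min SA.card SB.card SA'.card SB'.card hab1 hab2
  have h2 : BI.card ≤ min SA.card SB.card := le_min hBIa hBIb
  have h3 : BO.card ≤ min SA'.card SB'.card := le_min hBOa hBOb
  linarith

/-- For `max{k,2} ≤ m ≤ ⌊n/2⌋` and `k ≥ 1`, the graph `K^k_{n-m,m}` has edge
connectivity exactly `k`. -/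
theorem stmt4 (n m k : ℕ) (hk : 1 ≤ k) (hm1 : max k 2 ≤ m) (hm2 : m ≤ n / 2) :
    edgeConn (Kmk n m k) = k := by
  have hkm : k ≤ m := le_trans (le_max_left _ _) hm1
  have h2m : 2 ≤ m := le_trans (le_max_right _ _) hm1
  have hmn : 2 * m ≤ n := by omega
  obtain ⟨F, h1, h2, h3⟩ := part1 n m k hk hkm h2m hmn
  rw [edgeConn]
  have hmem : k ∈ {j | ∃ F : Set (Sym2 (Fin n)), F ⊆ (Kmk n m k).edgeSet ∧ F.ncard = j ∧
      ¬((Kmk n m k).deleteEdges F).Connected} := ⟨F, h1, h2, h3⟩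
  apply le_antisymm
  · exact Nat.sInf_le hmem
  · apply le_csInf ⟨k, hmem⟩
    rintro j ⟨F', hF1, hF2, hF3⟩
    rw [← hF2]
    exact part2 n m k hk hkm h2m hmn F' hF1 hF3
end

section
/- Let G be a connected simple graph of order n ≥ 2 with edge connectivity k (1 ≤ k ≤ n − 1) such that G is not isomorphic to K^k_{n-1,1} and G has a trivial k-edge cut. Then m(G,t) ≤ m(K^k_{n-1,1}, t) for all t = 0, 1, …, ⌊n/2⌋, with strict inequality for at least one t. -/
section AuxEmb

variable {V W : Type*} {G : SimpleGraph V} {H : SimpleGraph W} {f : V → W} {t : ℕ}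

lemma map_matching [DecidableEq (Sym2 W)] (hf : Function.Injective f)
    (he : ∀ e ∈ G.edgeSet, e.map f ∈ H.edgeSet)
    (s : Finset (Sym2 V)) (hs : ↑s ⊆ G.edgeSet ∧ s.card = t ∧
      (s : Set (Sym2 V)).Pairwise fun e f => ∀ v, ¬(v ∈ e ∧ v ∈ f)) :
    ↑(s.image (Sym2.map f)) ⊆ H.edgeSet ∧ (s.image (Sym2.map f)).card = t ∧
      ((s.image (Sym2.map f)) : Set (Sym2 W)).Pairwise fun e f => ∀ v, ¬(v ∈ e ∧ v ∈ f) := by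
  obtain ⟨h1, h2, h3⟩ := hs
  refine ⟨?_, ?_, ?_⟩
  · intro e' he'
    simp only [Finset.coe_image, Set.mem_image, Finset.mem_coe] at he'
    obtain ⟨e, hes, rfl⟩ := he'
    exact he e (h1 hes)
  · rw [Finset.card_image_of_injective _ (Sym2.map.injective hf)]; exact h2
  · intro e' he' f' hf' hne w hw
    simp only [Finset.coe_image, Set.mem_image, Finset.mem_coe] at he' hf'
    obtain ⟨e, hes, rfl⟩ := he'
    obtain ⟨e2, he2s, rfl⟩ := hf'
    obtain ⟨a, ha, hfa⟩ := Sym2.mem_map.mp hw.1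
    obtain ⟨b, hb, hfb⟩ := Sym2.mem_map.mp hw.2
    have hab : a = b := hf (by rw [hfa, hfb])
    have hee : e ≠ e2 := fun h => hne (by rw [h])
    exact h3 hes he2s hee a ⟨ha, hab ▸ hb⟩

variable [Fintype V] [Fintype W]

lemma matchCount_le_of_emb (hf : Function.Injective f)
    (he : ∀ e ∈ G.edgeSet, e.map f ∈ H.edgeSet) (t : ℕ) :
    matchCount G t ≤ matchCount H t := by
  classical
  exact Nat.card_le_card_of_injective
    (fun s => ⟨s.1.image (Sym2.map f), map_matching hf he s.1 s.2⟩)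
    (fun s1 s2 h => Subtype.ext (Finset.image_injective (Sym2.map.injective hf)
      (congrArg Subtype.val h)))

lemma matchCount_lt_of_emb (hf : Function.Injective f)
    (he : ∀ e ∈ G.edgeSet, e.map f ∈ H.edgeSet)
    (e₀ : Sym2 W) (he₀ : e₀ ∈ H.edgeSet) (he₀' : e₀ ∉ Sym2.map f '' G.edgeSet) :
    matchCount G 1 < matchCount H 1 := by
  classical
  set F : {s : Finset (Sym2 V) // ↑s ⊆ G.edgeSet ∧ s.card = 1 ∧
      (s : Set (Sym2 V)).Pairwise fun e f => ∀ v, ¬(v ∈ e ∧ v ∈ f)} →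
    {s : Finset (Sym2 W) // ↑s ⊆ H.edgeSet ∧ s.card = 1 ∧
      (s : Set (Sym2 W)).Pairwise fun e f => ∀ v, ¬(v ∈ e ∧ v ∈ f)} :=
    fun s => ⟨s.1.image (Sym2.map f), map_matching hf he s.1 s.2⟩ with hF
  have hinj : Function.Injective F := fun s1 s2 h =>
    Subtype.ext (Finset.image_injective (Sym2.map.injective hf) (congrArg Subtype.val h))
  have hsur : ¬ Function.Surjective F := by
    intro hsur
    obtain ⟨s, hs⟩ := hsur ⟨{e₀}, by simpa using he₀, by simp, by simp⟩
    have hcard := s.2.2.1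
    obtain ⟨e, hse⟩ := Finset.card_eq_one.mp hcard
    have : Sym2.map f e = e₀ := by
      have := congrArg Subtype.val hs
      simp only [hF, hse, Finset.image_singleton] at this
      exact Finset.singleton_injective this
    exact he₀' ⟨e, s.2.1 (by simp [hse]), this⟩
  haveI : Fintype {s : Finset (Sym2 V) // ↑s ⊆ G.edgeSet ∧ s.card = 1 ∧
      (s : Set (Sym2 V)).Pairwise fun e f => ∀ v, ¬(v ∈ e ∧ v ∈ f)} := Fintype.ofFinite _
  haveI : Fintype {s : Finset (Sym2 W) // ↑s ⊆ H.edgeSet ∧ s.card = 1 ∧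
      (s : Set (Sym2 W)).Pairwise fun e f => ∀ v, ¬(v ∈ e ∧ v ∈ f)} := Fintype.ofFinite _
  rw [matchCount, matchCount, Nat.card_eq_fintype_card, Nat.card_eq_fintype_card]
  exact Fintype.card_lt_of_injective_not_surjective F hinj hsur

end AuxEmb

/-- If `G ≇ K^k_{n-1,1}` is connected of order `n ≥ 2` with edge connectivity `k`
(`1 ≤ k ≤ n − 1`) and has a trivial `k`-edge cut, then `m(G,t) ≤ m(K^k_{n-1,1},t)`
for all `t ≤ ⌊n/2⌋`, with strict inequality for at least one such `t`. -/
theorem stmt6 {V : Type*} [Fintype V] (G : SimpleGraph V) (n k : ℕ)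
    (hn : Fintype.card V = n) (hn2 : 2 ≤ n) (hG : G.Connected)
    (hk : edgeConn G = k) (hk1 : 1 ≤ k) (hk2 : k ≤ n - 1)
    (hniso : ¬ Nonempty (G ≃g Kstar n k))
    (htriv : ∃ v : V, (edgeCut G {v}).ncard = k) :
    (∀ t : ℕ, t ≤ n / 2 → matchCount G t ≤ matchCount (Kstar n k) t) ∧
    (∃ t : ℕ, t ≤ n / 2 ∧ matchCount G t < matchCount (Kstar n k) t) := by
  classical
  obtain ⟨v, hv⟩ := htriv
  -- the trivial cut at `v` consists exactly of the edges from `v` to its neighbors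
  have hcut : edgeCut G {v} = (fun u => s(v, u)) '' (G.neighborSet v) := by
    ext e
    constructor
    · rintro ⟨hee, u, hu, w, hw, rfl⟩
      rw [Set.mem_singleton_iff] at hu
      subst hu
      exact ⟨w, (G.mem_edgeSet).mp hee, rfl⟩
    · rintro ⟨u, hu, rfl⟩
      refine ⟨(G.mem_edgeSet).mpr hu, v, rfl, u, ?_, rfl⟩
      intro h
      rw [Set.mem_singleton_iff] at h
      subst h
      exact G.loopless.irrefl _ hu
  have hNs : (G.neighborSet v).ncard = k := by
    rw [← hv, hcut, Set.ncard_image_of_injOn]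
    intro a ha b hb hab
    rw [Sym2.eq_iff] at hab
    rcases hab with ⟨_, h⟩ | ⟨h1, h2⟩
    · exact h
    · subst h2; exact absurd ha (G.loopless.irrefl _)
  set N : Finset V := (G.neighborSet v).toFinset with hN
  have hvN : v ∉ N := by simp [hN]
  have hmemN : ∀ u, u ∈ N ↔ G.Adj v u := by intro u; simp [hN]
  have hNcard : N.card = k := by rw [← hNs]; exact (Set.ncard_eq_toFinset_card' _).symm
  set R : Finset V := Finset.univ \ insert v N with hR
  have hRcard : R.card = n - 1 - k := by
    have h1 : (insert v N).card = k + 1 := by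
      rw [Finset.card_insert_of_notMem hvN, hNcard]
    rw [hR, Finset.card_sdiff_of_subset (Finset.subset_univ _), h1, Finset.card_univ, hn]
    omega
  have hmemR : ∀ u, u ≠ v → u ∉ N → u ∈ R := by
    intro u huv huN
    simp [hR, huv, huN]
  let eN : {x // x ∈ N} ≃ Fin k := Finset.equivFinOfCardEq hNcard
  let eR : {x // x ∈ R} ≃ Fin (n - 1 - k) := Finset.equivFinOfCardEq hRcard
  have hn1 : n - 1 < n := by omega
  let f : V → Fin n := fun u =>
    if hu : u = v then ⟨n - 1, hn1⟩
    else if hN : u ∈ N then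
      ⟨(eN ⟨u, hN⟩).val, by have := (eN ⟨u, hN⟩).isLt; omega⟩
    else
      ⟨k + (eR ⟨u, hmemR u hu hN⟩).val, by
        have := (eR ⟨u, hmemR u hu hN⟩).isLt; omega⟩
  have hfv : (f v).val = n - 1 := by simp [f]
  have hfNval : ∀ u (hu : u ∈ N), (f u).val = (eN ⟨u, hu⟩).val := by
    intro u hu
    have huv : u ≠ v := by rintro rfl; exact hvN hu
    simp [f, huv, hu]
  have hfNlt : ∀ u, u ∈ N → (f u).val < k := by
    intro u hu
    rw [hfNval u hu]
    exact (eN ⟨u, hu⟩).isLt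
  have hfRval : ∀ u (huv : u ≠ v) (huN : u ∉ N),
      (f u).val = k + (eR ⟨u, hmemR u huv huN⟩).val := by
    intro u huv huN
    simp [f, huv, huN]
  have hfRbd : ∀ u, u ≠ v → u ∉ N → k ≤ (f u).val ∧ (f u).val < n - 1 := by
    intro u huv huN
    rw [hfRval u huv huN]
    have := (eR ⟨u, hmemR u huv huN⟩).isLt
    omega
  have hlt' : ∀ u, u ≠ v → (f u).val < n - 1 := by
    intro u huv
    by_cases huN : u ∈ N
    · have := hfNlt u huN; omega
    · exact (hfRbd u huv huN).2
  have hfinj : Function.Injective f := by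
    intro a b hab
    have hval := congrArg Fin.val hab
    by_cases hav : a = v <;> by_cases hbv : b = v
    · rw [hav, hbv]
    · exfalso; subst hav
      have := hlt' b hbv; rw [hfv] at hval; omega
    · exfalso; subst hbv
      have := hlt' a hav; rw [hfv] at hval; omega
    · by_cases haN : a ∈ N <;> by_cases hbN : b ∈ N
      · rw [hfNval a haN, hfNval b hbN] at hval
        have h1 : eN ⟨a, haN⟩ = eN ⟨b, hbN⟩ := Fin.ext hval
        have := eN.injective h1
        exact congrArg Subtype.val this
      · exfalso
        have h1 := hfNlt a haN
        have h2 := (hfRbd b hbv hbN).1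
        omega
      · exfalso
        have h1 := hfNlt b hbN
        have h2 := (hfRbd a hav haN).1
        omega
      · rw [hfRval a hav haN, hfRval b hbv hbN] at hval
        have h1 : eR ⟨a, hmemR a hav haN⟩ = eR ⟨b, hmemR b hbv hbN⟩ :=
          Fin.ext (by omega)
        have := eR.injective h1
        exact congrArg Subtype.val this
  have hedge : ∀ e ∈ G.edgeSet, e.map f ∈ (Kstar n k).edgeSet := by
    intro e he
    induction e with
    | _ a b =>
      rw [G.mem_edgeSet] at he
      rw [Sym2.map_pair_eq, (Kstar n k).mem_edgeSet]
      have hne : f a ≠ f b := fun h => G.ne_of_adj he (hfinj h)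
      simp only [Kstar, SimpleGraph.fromRel_adj]
      refine ⟨hne, ?_⟩
      by_cases hav : a = v
      · subst hav
        have hbN : b ∈ N := (hmemN b).mpr he
        have h1 := hfNlt b hbN
        rw [hfv]
        omega
      · by_cases hbv : b = v
        · subst hbv
          have haN : a ∈ N := (hmemN a).mpr he.symm
          have h1 := hfNlt a haN
          rw [hfv]
          omega
        · have h1 := hlt' a hav
          have h2 := hlt' b hbv
          omega
  have himg : ¬ (Kstar n k).edgeSet ⊆ Sym2.map f '' G.edgeSet := by
    intro hsub
    have heq : Sym2.map f '' G.edgeSet = (Kstar n k).edgeSet :=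
      Set.Subset.antisymm (by rintro e ⟨e', he', rfl⟩; exact hedge e' he') hsub
    have hbij : Function.Bijective f := by
      rw [Fintype.bijective_iff_injective_and_card]
      exact ⟨hfinj, by simp [hn]⟩
    refine hniso ⟨⟨Equiv.ofBijective f hbij, @fun a b => ?_⟩⟩
    constructor
    · intro h
      have hmem : s(f a, f b) ∈ Sym2.map f '' G.edgeSet := by
        rw [heq]
        exact ((Kstar n k).mem_edgeSet).mpr h
      obtain ⟨e, he, hme⟩ := hmem
      have heq2 : e = s(a, b) :=
        Sym2.map.injective hfinj (by rw [hme, Sym2.map_pair_eq])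
      rw [heq2] at he
      exact (G.mem_edgeSet).mp he
    · intro h
      have h2 := hedge s(a, b) ((G.mem_edgeSet).mpr h)
      rw [Sym2.map_pair_eq] at h2
      exact ((Kstar n k).mem_edgeSet).mp h2
  obtain ⟨e₀, he₀, he₀'⟩ := Set.not_subset.mp himg
  exact ⟨fun t _ => matchCount_le_of_emb hfinj hedge t,
    1, by omega, matchCount_lt_of_emb hfinj hedge e₀ he₀ he₀'⟩
end

section
/- Let G_1 be a connected simple graph of order n with edge connectivity k having a k-edge cut ∂(S) such that the induced subgraphs G_1[S] and G_1[V∖S] are complete graphs K_m and K_{n-m} respectively, where k ≤ m ≤ ⌊n/2⌋. Suppose u_1, u_2 ∈ V∖S and v_1, v_2 ∈ S, that e_1 = u_1v_1 and e_2 = u_1v_2 are edges of ∂(S), and that u_2 is not incident with any edge of ∂(S). Let G_2 be obtained from G_1 by deleting e_2 and adding the edge u_2v_2. Then m(G_1,t) ≤ m(G_2,t) for all t, with strict inequality for some t (namely t = 2). -/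
/-- Operation I increases all matching numbers, strictly at `t = 2`. -/
theorem stmt9 {V : Type*} [Fintype V] (G₁ : SimpleGraph V) (n m k : ℕ)
    (hn : Fintype.card V = n) (hG₁ : G₁.Connected) (hk : edgeConn G₁ = k)
    (S : Set V) (hcut : (edgeCut G₁ S).ncard = k) (hm : S.ncard = m)
    (hkm : k ≤ m) (hm2 : m ≤ n / 2)
    (hScomp : ∀ a ∈ S, ∀ b ∈ S, a ≠ b → G₁.Adj a b)
    (hSccomp : ∀ a ∉ S, ∀ b ∉ S, a ≠ b → G₁.Adj a b)
    (u₁ u₂ v₁ v₂ : V) (hu₁ : u₁ ∉ S) (hu₂ : u₂ ∉ S) (hv₁ : v₁ ∈ S) (hv₂ : v₂ ∈ S)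
    (hv12 : v₁ ≠ v₂)
    (he₁ : s(u₁, v₁) ∈ edgeCut G₁ S) (he₂ : s(u₁, v₂) ∈ edgeCut G₁ S)
    (hu₂free : ∀ e ∈ edgeCut G₁ S, u₂ ∉ e) :
    (∀ t : ℕ, matchCount G₁ t ≤
        matchCount (G₁.deleteEdges {s(u₁, v₂)} ⊔ SimpleGraph.fromEdgeSet {s(u₂, v₂)}) t) ∧
    matchCount G₁ 2 <
      matchCount (G₁.deleteEdges {s(u₁, v₂)} ⊔ SimpleGraph.fromEdgeSet {s(u₂, v₂)}) 2 := by
  classical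
  -- abbreviations
  set e₂ : Sym2 V := s(u₁, v₂) with he2def
  -- basic vertex distinctness facts
  have hu₁v₂ : u₁ ≠ v₂ := fun h => hu₁ (h ▸ hv₂)
  have hu₁v₁ : u₁ ≠ v₁ := fun h => hu₁ (h ▸ hv₁)
  have hu₂v₂ : u₂ ≠ v₂ := fun h => hu₂ (h ▸ hv₂)
  have hu₂u₁ : u₂ ≠ u₁ := fun h =>
    hu₂free _ he₂ (Sym2.mem_iff.mpr (Or.inl h))
  have hu₂v₁ : u₂ ≠ v₁ := fun h =>
    hu₂free _ he₁ (Sym2.mem_iff.mpr (Or.inr h))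
  -- s(u₂, v₂) is not an edge of G₁
  have hnotG1 : s(u₂, v₂) ∉ G₁.edgeSet := fun h =>
    hu₂free _ ⟨h, v₂, hv₂, u₂, hu₂, Sym2.eq_swap⟩ (Sym2.mem_iff.mpr (Or.inl rfl))
  -- any edge of G₁ through u₂ has its other endpoint outside S
  have hu₂other : ∀ w, s(u₂, w) ∈ G₁.edgeSet → w ∉ S := by
    intro w hw hwS
    exact hu₂free _ ⟨hw, w, hwS, u₂, hu₂, Sym2.eq_swap⟩ (Sym2.mem_iff.mpr (Or.inl rfl))
  -- the edge set of G₂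
  have hG₂E : (G₁.deleteEdges {s(u₁, v₂)} ⊔
      SimpleGraph.fromEdgeSet {s(u₂, v₂)}).edgeSet =
      (G₁.edgeSet \ {e₂}) ∪ {s(u₂, v₂)} := by
    rw [SimpleGraph.edgeSet_sup, SimpleGraph.edgeSet_deleteEdges,
      SimpleGraph.edgeSet_fromEdgeSet]
    congr 1
    ext e
    simp only [Set.mem_diff, Set.mem_singleton_iff, Set.mem_setOf_eq]
    constructor
    · rintro ⟨rfl, -⟩; rfl
    · rintro rfl; exact ⟨rfl, by simp [Sym2.mk_isDiag_iff, hu₂v₂]⟩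
  -- the swap map on edges
  set σ : Sym2 V → Sym2 V := Sym2.map (Equiv.swap u₁ u₂) with hσdef
  have hσinj : Function.Injective σ := Sym2.map.injective (Equiv.injective _)
  have hswapswap : ((Equiv.swap u₁ u₂ : V → V) ∘ (Equiv.swap u₁ u₂ : V → V)) = id :=
    funext fun v => Equiv.swap_apply_self _ _ _
  have hσσ : ∀ e, σ (σ e) = e := by
    intro e
    rw [hσdef, Sym2.map_map, hswapswap, Sym2.map_id, id_eq]
  have hσmem : ∀ (v : V) (e : Sym2 V), v ∈ σ e ↔ (Equiv.swap u₁ u₂) v ∈ e := by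
    intro v e
    rw [hσdef, Sym2.mem_map]
    constructor
    · rintro ⟨a, ha, rfl⟩; rwa [Equiv.swap_apply_self]
    · intro h; exact ⟨_, h, Equiv.swap_apply_self _ _ _⟩
  have hσe₂ : σ e₂ = s(u₂, v₂) := by
    rw [hσdef, he2def, Sym2.map_pair_eq, Equiv.swap_apply_left,
      Equiv.swap_apply_of_ne_of_ne hu₁v₂.symm hu₂v₂.symm]
  have hσfix : ∀ e : Sym2 V, u₁ ∉ e → u₂ ∉ e → σ e = e := by
    intro e
    induction e using Sym2.ind with
    | _ a b =>
      intro h1 h2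
      rw [Sym2.mem_iff] at h1 h2
      push_neg at h1 h2
      rw [hσdef, Sym2.map_pair_eq,
        Equiv.swap_apply_of_ne_of_ne (Ne.symm h1.1) (Ne.symm h2.1),
        Equiv.swap_apply_of_ne_of_ne (Ne.symm h1.2) (Ne.symm h2.2)]
  -- the matching map
  set φ : Finset (Sym2 V) → Finset (Sym2 V) :=
    fun s => if e₂ ∈ s then s.image σ else s with hφdef
  -- φ sends matchings of G₁ to matchings of G₂
  have main : ∀ (t : ℕ) (s : Finset (Sym2 V)),
      (↑s ⊆ G₁.edgeSet ∧ s.card = t ∧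
        (s : Set (Sym2 V)).Pairwise fun e f => ∀ v, ¬(v ∈ e ∧ v ∈ f)) →
      (↑(φ s) ⊆ (G₁.deleteEdges {s(u₁, v₂)} ⊔
          SimpleGraph.fromEdgeSet {s(u₂, v₂)}).edgeSet ∧ (φ s).card = t ∧
        ((φ s) : Set (Sym2 V)).Pairwise fun e f => ∀ v, ¬(v ∈ e ∧ v ∈ f)) := by
    intro t s ⟨hsub, hcard, hpair⟩
    rw [hφdef]
    by_cases hmem : e₂ ∈ s
    · simp only [if_pos hmem]
      refine ⟨?_, ?_, ?_⟩
      · intro x hx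
        rw [Finset.mem_coe, Finset.mem_image] at hx
        obtain ⟨e, he, rfl⟩ := hx
        rw [hG₂E]
        by_cases heq : e = e₂
        · subst heq
          rw [hσe₂]
          exact Or.inr rfl
        · have hu₁e : u₁ ∉ e := by
            intro hu₁e
            exact hpair (Finset.mem_coe.mpr hmem) (Finset.mem_coe.mpr he)
              (Ne.symm heq) u₁ ⟨Sym2.mem_iff.mpr (Or.inl rfl), hu₁e⟩
          by_cases hu₂e : u₂ ∈ e
          · obtain ⟨w, rfl⟩ := Sym2.mem_iff_exists.mp hu₂e
            have hwu₂ : u₂ ≠ w := fun h =>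
              (G₁.not_isDiag_of_mem_edgeSet (hsub (Finset.mem_coe.mpr he)))
                (Sym2.mk_isDiag_iff.mpr h)
            have hwu₁ : w ≠ u₁ := fun h => hu₁e (Sym2.mem_iff.mpr (Or.inr h.symm))
            have hwS : w ∉ S := hu₂other w (hsub (Finset.mem_coe.mpr he))
            have hσe : σ s(u₂, w) = s(u₁, w) := by
              rw [hσdef, Sym2.map_pair_eq, Equiv.swap_apply_right,
                Equiv.swap_apply_of_ne_of_ne hwu₁ (Ne.symm hwu₂)]
            rw [hσe]
            refine Or.inl ⟨(SimpleGraph.mem_edgeSet _).mpr (hSccomp u₁ hu₁ w hwS (Ne.symm hwu₁)), ?_⟩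
            rw [Set.mem_singleton_iff, he2def]
            intro h
            exact hwS (Sym2.congr_right.mp h ▸ hv₂)
          · rw [hσfix e hu₁e hu₂e]
            refine Or.inl ⟨hsub (Finset.mem_coe.mpr he), ?_⟩
            rw [Set.mem_singleton_iff]
            intro h
            exact hu₁e (h ▸ Sym2.mem_iff.mpr (Or.inl rfl))
      · rw [Finset.card_image_of_injective s hσinj, hcard]
      · intro x hx y hy hxy v ⟨hvx, hvy⟩
        rw [Finset.mem_coe, Finset.mem_image] at hx hy
        obtain ⟨a, ha, rfl⟩ := hx
        obtain ⟨b, hb, rfl⟩ := hy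
        have hab : a ≠ b := fun h => hxy (h ▸ rfl)
        rw [hσmem] at hvx hvy
        exact hpair (Finset.mem_coe.mpr ha) (Finset.mem_coe.mpr hb) hab
          ((Equiv.swap u₁ u₂) v) ⟨hvx, hvy⟩
    · simp only [if_neg hmem]
      refine ⟨?_, hcard, hpair⟩
      intro x hx
      rw [hG₂E]
      refine Or.inl ⟨hsub hx, ?_⟩
      rw [Set.mem_singleton_iff]
      rintro rfl
      exact hmem (Finset.mem_coe.mp hx)
  -- φ is injective on matchings of G₁
  have hφinj : ∀ s s' : Finset (Sym2 V), ↑s ⊆ G₁.edgeSet → ↑s' ⊆ G₁.edgeSet →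
      φ s = φ s' → s = s' := by
    intro s s' hs hs' h
    rw [hφdef] at h
    simp only at h
    by_cases h1 : e₂ ∈ s <;> by_cases h2 : e₂ ∈ s'
    · rw [if_pos h1, if_pos h2] at h
      exact Finset.image_injective hσinj h
    · rw [if_pos h1, if_neg h2] at h
      exfalso
      have : s(u₂, v₂) ∈ s' := by
        rw [← h, Finset.mem_image]
        exact ⟨e₂, h1, hσe₂⟩
      exact hnotG1 (hs' (Finset.mem_coe.mpr this))
    · rw [if_neg h1, if_pos h2] at h
      exfalso
      have : s(u₂, v₂) ∈ s := by
        rw [h, Finset.mem_image]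
        exact ⟨e₂, h2, hσe₂⟩
      exact hnotG1 (hs (Finset.mem_coe.mpr this))
    · rwa [if_neg h1, if_neg h2] at h
  -- finiteness
  haveI : Finite (Sym2 V) := inferInstance
  -- the injections between matching sets
  have hle : ∀ t : ℕ, matchCount G₁ t ≤
      matchCount (G₁.deleteEdges {s(u₁, v₂)} ⊔ SimpleGraph.fromEdgeSet {s(u₂, v₂)}) t := by
    intro t
    exact Nat.card_le_card_of_injective
      (fun x => ⟨φ x.1, main t x.1 x.2⟩)
      (fun x y h => Subtype.ext (hφinj x.1 y.1 x.2.1 y.2.1 (congrArg Subtype.val h)))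
  refine ⟨hle, ?_⟩
  -- strict inequality at t = 2
  -- witness matching of G₂ not in the range
  have hNe : s(u₂, v₂) ≠ s(u₁, v₁) := by
    intro heq
    rw [Sym2.eq_iff] at heq
    rcases heq with ⟨h, -⟩ | ⟨h, -⟩
    exacts [hu₂u₁ h, hu₂v₁ h]
  set N : Finset (Sym2 V) := {s(u₂, v₂), s(u₁, v₁)} with hNdef
  have hN : ↑N ⊆ (G₁.deleteEdges {s(u₁, v₂)} ⊔
      SimpleGraph.fromEdgeSet {s(u₂, v₂)}).edgeSet ∧ N.card = 2 ∧
      (N : Set (Sym2 V)).Pairwise fun e f => ∀ v, ¬(v ∈ e ∧ v ∈ f) := by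
    refine ⟨?_, ?_, ?_⟩
    · intro x hx
      rw [Finset.mem_coe, hNdef, Finset.mem_insert, Finset.mem_singleton] at hx
      rw [hG₂E]
      rcases hx with rfl | rfl
      · exact Or.inr rfl
      · refine Or.inl ⟨he₁.1, ?_⟩
        rw [Set.mem_singleton_iff, he2def]
        intro h
        exact hv12 (Sym2.congr_right.mp h)
    · rw [hNdef, Finset.card_insert_of_notMem (by simp [hNe]), Finset.card_singleton]
    · intro x hx y hy hxy v ⟨hvx, hvy⟩
      rw [Finset.mem_coe, hNdef, Finset.mem_insert, Finset.mem_singleton] at hx hy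
      have key : ∀ w : V, w ∈ s(u₂, v₂) → w ∈ s(u₁, v₁) → False := by
        intro w hw1 hw2
        rw [Sym2.mem_iff] at hw1 hw2
        rcases hw1 with rfl | rfl <;> rcases hw2 with rfl | rfl
        exacts [hu₂u₁ rfl, hu₂v₁ rfl, hu₁v₂ rfl.symm, hv12 rfl.symm]
      rcases hx with rfl | rfl <;> rcases hy with rfl | rfl
      · exact hxy rfl
      · exact key v hvx hvy
      · exact key v hvy hvx
      · exact hxy rfl
  -- set up Fintype instances
  haveI hA : Fintype {s : Finset (Sym2 V) // ↑s ⊆ G₁.edgeSet ∧ s.card = 2 ∧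
      (s : Set (Sym2 V)).Pairwise fun e f => ∀ v, ¬(v ∈ e ∧ v ∈ f)} :=
    Fintype.ofFinite _
  haveI hB : Fintype {s : Finset (Sym2 V) // ↑s ⊆ (G₁.deleteEdges {s(u₁, v₂)} ⊔
      SimpleGraph.fromEdgeSet {s(u₂, v₂)}).edgeSet ∧ s.card = 2 ∧
      (s : Set (Sym2 V)).Pairwise fun e f => ∀ v, ¬(v ∈ e ∧ v ∈ f)} :=
    Fintype.ofFinite _
  rw [matchCount, matchCount, Nat.card_eq_fintype_card, Nat.card_eq_fintype_card]
  refine Fintype.card_lt_of_injective_of_notMem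
    (fun x => ⟨φ x.1, main 2 x.1 x.2⟩)
    (fun x y h => Subtype.ext (hφinj x.1 y.1 x.2.1 y.2.1 (congrArg Subtype.val h)))
    (b := ⟨N, hN⟩) ?_
  rintro ⟨⟨s, hs⟩, heq⟩
  have hφs : φ s = N := congrArg Subtype.val heq
  rw [hφdef] at hφs
  simp only at hφs
  by_cases hmem : e₂ ∈ s
  · rw [if_pos hmem] at hφs
    have hmem2 : s(u₁, v₁) ∈ s.image σ := by
      rw [hφs, hNdef]
      exact Finset.mem_insert_of_mem (Finset.mem_singleton_self _)
    rw [Finset.mem_image] at hmem2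
    obtain ⟨a, ha, hσa⟩ := hmem2
    have haval : a = σ s(u₁, v₁) := by rw [← hσa, hσσ]
    have hσv : σ s(u₁, v₁) = s(u₂, v₁) := by
      rw [hσdef, Sym2.map_pair_eq, Equiv.swap_apply_left,
        Equiv.swap_apply_of_ne_of_ne (Ne.symm hu₁v₁) (Ne.symm hu₂v₁)]
    rw [haval, hσv] at ha
    have hedge : s(u₂, v₁) ∈ G₁.edgeSet := hs.1 (Finset.mem_coe.mpr ha)
    exact hu₂free _ ⟨hedge, v₁, hv₁, u₂, hu₂, Sym2.eq_swap⟩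
      (Sym2.mem_iff.mpr (Or.inl rfl))
  · rw [if_neg hmem] at hφs
    have : s(u₂, v₂) ∈ s := by
      rw [hφs, hNdef]
      exact Finset.mem_insert_self _ _
    exact hnotG1 (hs.1 (Finset.mem_coe.mpr this))
end

section
/- Let G be a connected simple graph of order n with edge connectivity k (1 ≤ k ≤ n − 1) having no trivial k-edge cut. Then there exists an integer m with max{k, 2} ≤ m ≤ ⌊n/2⌋ such that m(G,t) ≤ m(K^k_{n-m,m}, t) for all t = 0, 1, …, ⌊n/2⌋. -/
section Aux
open SimpleGraph
variable {V : Type*}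

lemma edgeCut_compl {V : Type*} (G : SimpleGraph V) (S : Set V) :
    edgeCut G Sᶜ = edgeCut G S := by
  ext e
  constructor <;> rintro ⟨he, u, hu, v, hv, rfl⟩
  · exact ⟨he, v, by simpa using hv, u, by simpa using hu, Sym2.eq_swap⟩
  · exact ⟨he, v, by simpa using hv, u, by simpa using hu, Sym2.eq_swap⟩

lemma walk_stays (G : SimpleGraph V) (S : Set V) :
    ∀ {u v : V}, (G.deleteEdges (edgeCut G S)).Walk u v → u ∈ S → v ∈ S := by
  intro u v w
  induction w with
  | nil => exact id
  | @cons a b c hab _ ih =>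
    intro ha
    by_cases hb : b ∈ S
    · exact ih hb
    · rw [SimpleGraph.deleteEdges_adj] at hab
      exact absurd ⟨(SimpleGraph.mem_edgeSet _).2 hab.1, a, ha, b, hb, rfl⟩ hab.2

lemma cut_disconnects (G : SimpleGraph V) (S : Set V) (hS : S.Nonempty) (hS' : Sᶜ.Nonempty) :
    ¬ (G.deleteEdges (edgeCut G S)).Connected := by
  intro h
  obtain ⟨u, hu⟩ := hS
  obtain ⟨v, hv⟩ := hS'
  exact hv (walk_stays G S (h.preconnected u v).some hu)

lemma edgeConn_le_cut [Fintype V] (G : SimpleGraph V) (S : Set V)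
    (hS : S.Nonempty) (hS' : Sᶜ.Nonempty) : edgeConn G ≤ (edgeCut G S).ncard :=
  Nat.sInf_le ⟨edgeCut G S, fun _ he => he.1, rfl, cut_disconnects G S hS hS'⟩

lemma cutset_nonempty [Fintype V] (G : SimpleGraph V) (h2 : Nontrivial V) :
    {j | ∃ F : Set (Sym2 V), F ⊆ G.edgeSet ∧ F.ncard = j ∧ ¬(G.deleteEdges F).Connected}.Nonempty := by
  refine ⟨_, G.edgeSet, le_refl _, rfl, ?_⟩
  rw [SimpleGraph.deleteEdges_edgeSet, sdiff_self]
  intro h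
  exact SimpleGraph.not_preconnected_bot h.preconnected

lemma exists_min_cut [Fintype V] (G : SimpleGraph V) (h2 : Nontrivial V) :
    ∃ S : Set V, S.Nonempty ∧ Sᶜ.Nonempty ∧ (edgeCut G S).ncard = edgeConn G := by
  have hmem := Nat.sInf_mem (cutset_nonempty G h2)
  obtain ⟨F, hFsub, hFcard, hFdis⟩ := hmem
  rw [SimpleGraph.connected_iff] at hFdis
  push_neg at hFdis
  have hne : Nonempty V := h2.to_nonempty
  obtain ⟨u, v, huv⟩ : ∃ u v : V, ¬ (G.deleteEdges F).Reachable u v := by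
    by_contra hc
    push_neg at hc
    exact @not_isEmpty_of_nonempty V hne (hFdis (fun a b => hc a b))
  set S : Set V := {w | (G.deleteEdges F).Reachable u w} with hSdef
  have hu : u ∈ S := SimpleGraph.Reachable.refl u
  have hv : v ∈ Sᶜ := huv
  have hsub : edgeCut G S ⊆ F := by
    rintro e ⟨he, a, ha, b, hb, rfl⟩
    by_contra heF
    exact hb (ha.trans (SimpleGraph.Adj.reachable (by
      rw [SimpleGraph.deleteEdges_adj]
      exact ⟨(SimpleGraph.mem_edgeSet _).1 he, heF⟩)))
  refine ⟨S, ⟨u, hu⟩, ⟨v, hv⟩, le_antisymm ?_ (edgeConn_le_cut G S ⟨u, hu⟩ ⟨v, hv⟩)⟩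
  calc (edgeCut G S).ncard ≤ F.ncard := Set.ncard_le_ncard hsub (Set.toFinite F)
    _ = edgeConn G := hFcard

lemma big [Fintype V] (G : SimpleGraph V) (k : ℕ) (S : Set V)
    (hdeg : ∀ v : V, k + 1 ≤ (edgeCut G {v}).ncard)
    (hcut : (edgeCut G S).ncard ≤ k)
    (hS : S.Nonempty) : k + 2 ≤ S.ncard := by
  classical
  set SF : Finset V := (Set.toFinite S).toFinset with hSF
  have hmemSF : ∀ x, x ∈ SF ↔ x ∈ S := fun x => Set.Finite.mem_toFinset _
  set s : ℕ := SF.card with hs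
  have hsncard : S.ncard = s := Set.ncard_eq_toFinset_card S (Set.toFinite S)
  set cutF : Finset (Sym2 V) := (Set.toFinite (edgeCut G S)).toFinset with hcutF
  have hmemcut : ∀ e, e ∈ cutF ↔ e ∈ edgeCut G S := fun e => Set.Finite.mem_toFinset _
  have hcutcard : cutF.card ≤ k := by
    rwa [← Set.ncard_eq_toFinset_card _ (Set.toFinite _)]
  set cutAt : V → Finset (Sym2 V) := fun v => cutF.filter (fun e => v ∈ e) with hcutAt
  have hs1 : 1 ≤ s := by
    rw [hs]
    obtain ⟨x, hx⟩ := hS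
    exact Finset.card_pos.2 ⟨x, (hmemSF x).2 hx⟩
  -- biUnion decomposition
  have hbi : cutF = SF.biUnion cutAt := by
    apply Finset.ext
    intro e
    simp only [Finset.mem_biUnion, hcutAt, Finset.mem_filter]
    constructor
    · intro he
      obtain ⟨_, a, ha, b, hb, rfl⟩ := (hmemcut e).1 he
      exact ⟨a, (hmemSF a).2 ha, he, Sym2.mem_mk_left a b⟩
    · rintro ⟨a, _, he, _⟩
      exact he
  have hdisj : (SF : Set V).PairwiseDisjoint cutAt := by
    intro a ha b hb hab
    simp only [Function.onFun, Finset.disjoint_left, hcutAt, Finset.mem_filter]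
    rintro e ⟨hecut, hae⟩ ⟨_, hbe⟩
    obtain ⟨_, x, hx, y, hy, rfl⟩ := (hmemcut e).1 hecut
    have hmem : ∀ z, z ∈ S → z ∈ s(x,y) → z = x := by
      intro z hz hze
      rcases Sym2.mem_iff.1 hze with h | h
      · exact h
      · exact absurd (h ▸ hz) hy
    exact hab ((hmem a ((hmemSF a).1 ha) hae).trans (hmem b ((hmemSF b).1 hb) hbe).symm)
  have hsum : cutF.card = ∑ v ∈ SF, (cutAt v).card := by
    rw [hbi]; exact Finset.card_biUnion (fun a ha b hb hab => hdisj ha hb hab)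
  -- per-vertex lower bound
  have hper : ∀ v ∈ SF, k + 2 - s ≤ (cutAt v).card := by
    intro v hv
    have hvS : v ∈ S := (hmemSF v).1 hv
    set Ev : Finset (Sym2 V) := (Set.toFinite (edgeCut G {v})).toFinset with hEv
    have hmemEv : ∀ e, e ∈ Ev ↔ e ∈ edgeCut G {v} := fun e => Set.Finite.mem_toFinset _
    have hEvcard : k + 1 ≤ Ev.card := by
      rw [← Set.ncard_eq_toFinset_card _ (Set.toFinite _)]; exact hdeg v
    have hsubEv : cutAt v ⊆ Ev := by
      intro e he
      simp only [hcutAt, Finset.mem_filter] at he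
      obtain ⟨hecut, hve⟩ := he
      obtain ⟨hedge, x, hx, y, hy, rfl⟩ := (hmemcut e).1 hecut
      have hvx : v = x := by
        rcases Sym2.mem_iff.1 hve with h | h
        · exact h
        · exact absurd (h ▸ hvS) hy
      subst hvx
      refine (hmemEv _).2 ⟨hedge, v, rfl, y, ?_, rfl⟩
      simp only [Set.mem_singleton_iff]
      rintro rfl; exact hy hvS
    -- inject Ev \ cutAt v into SF.erase v
    have hinj : (Ev \ cutAt v).card ≤ (SF.erase v).card := by
      apply Finset.card_le_card_of_injOn (fun e => if h : v ∈ e then Sym2.Mem.other h else v)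
      · intro e he
        simp only [Finset.mem_coe, Finset.mem_sdiff] at he
        obtain ⟨heEv, hecutAt⟩ := he
        obtain ⟨hedge, x, hx, y, hy, hexy⟩ := (hmemEv e).1 heEv
        simp only [Set.mem_singleton_iff] at hx hy
        rw [hx] at hexy
        have hve : v ∈ e := hexy ▸ Sym2.mem_mk_left _ _
        simp only [dif_pos hve]
        have hespec := Sym2.other_spec hve
        have hne : Sym2.Mem.other hve ≠ v := by
          intro hcontra
          have : e.IsDiag := by rw [← hespec, hcontra]; exact Sym2.mk_isDiag_iff.2 rfl
          exact (G.not_isDiag_of_mem_edgeSet hedge) this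
        have hoS : Sym2.Mem.other hve ∈ S := by
          by_contra ho
          apply hecutAt
          simp only [hcutAt, Finset.mem_filter]
          exact ⟨(hmemcut e).2 ⟨hedge, v, hvS, _, ho, hespec.symm⟩, hve⟩
        exact Finset.mem_erase.2 ⟨hne, (hmemSF _).2 hoS⟩
      · intro e he f hf hef
        simp only [Finset.mem_coe, Finset.mem_sdiff] at he hf
        have hve : v ∈ e := by
          obtain ⟨_, x, hx, y, hy, hexy⟩ := (hmemEv e).1 he.1
          simp only [Set.mem_singleton_iff] at hx
          rw [hx] at hexy; exact hexy ▸ Sym2.mem_mk_left _ _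
        have hvf : v ∈ f := by
          obtain ⟨_, x, hx, y, hy, hfxy⟩ := (hmemEv f).1 hf.1
          simp only [Set.mem_singleton_iff] at hx
          rw [hx] at hfxy; exact hfxy ▸ Sym2.mem_mk_left _ _
        simp only [dif_pos hve, dif_pos hvf] at hef
        rw [← Sym2.other_spec hve, ← Sym2.other_spec hvf, hef]
    have hcardeq : (Ev \ cutAt v).card + (cutAt v).card = Ev.card :=
      Finset.card_sdiff_add_card_eq_card hsubEv
    have herase : (SF.erase v).card = s - 1 := by
      rw [Finset.card_erase_of_mem hv]
    omega
  -- total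
  by_contra hcon
  push_neg at hcon
  have hsk : s ≤ k + 1 := by omega
  have htot : s * (k + 2 - s) ≤ cutF.card := by
    rw [hsum]
    calc s * (k + 2 - s) = ∑ _v ∈ SF, (k + 2 - s) := by rw [Finset.sum_const, smul_eq_mul]
      _ ≤ ∑ v ∈ SF, (cutAt v).card := Finset.sum_le_sum hper
  have hfin : s * (k + 2 - s) ≤ k := le_trans htot hcutcard
  set d := k + 2 - s with hd
  have hd1 : 1 ≤ d := by omega
  have hsd : s + d = k + 2 := by omega
  have : s + d - 1 ≤ s * d := by
    calc s + d - 1 = s * 1 + 1 * (d - 1) := by omega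
      _ ≤ s * (d - 1) + s * 1 := by rw [add_comm]; gcongr <;> omega
      _ = s * d := by rw [← Nat.mul_add]; congr 1; omega
  omega

lemma extendInjOn {α β : Type*} [Fintype α] [DecidableEq α] [Fintype β] [DecidableEq β]
    (h : Fintype.card α = Fintype.card β) (A : Finset α) (f : α → β)
    (hf : Set.InjOn f ↑A) : ∃ e : α ≃ β, ∀ a ∈ A, e a = f a := by
  classical
  set B : Finset β := A.image f with hBdef
  have hB : B.card = A.card := Finset.card_image_of_injOn hf
  have hcompl : Fintype.card ↥(Aᶜ : Finset α) = Fintype.card ↥(Bᶜ : Finset β) := by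
    simp only [Fintype.card_coe, Finset.card_compl, hB, h]
  set g : ↥(Aᶜ : Finset α) ≃ ↥(Bᶜ : Finset β) := Fintype.equivOfCardEq hcompl with hg
  set F : α → β := fun x => if hx : x ∈ A then f x else
    (g ⟨x, Finset.mem_compl.2 hx⟩ : β) with hF
  have hFval : ∀ a ∈ A, F a = f a := fun a ha => by simp [hF, dif_pos ha]
  have hmemB : ∀ x, x ∉ A → F x ∉ B := by
    intro x hx
    have := (g ⟨x, Finset.mem_compl.2 hx⟩).2
    rw [Finset.mem_compl] at this
    simpa [hF, dif_neg hx] using this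
  have hinj : Function.Injective F := by
    intro x y hxy
    by_cases hx : x ∈ A <;> by_cases hy : y ∈ A
    · exact hf hx hy (by rwa [hFval x hx, hFval y hy] at hxy)
    · exfalso
      apply hmemB y hy
      rw [← hxy, hFval x hx]
      exact Finset.mem_image_of_mem f hx
    · exfalso
      apply hmemB x hx
      rw [hxy, hFval y hy]
      exact Finset.mem_image_of_mem f hy
    · have : g ⟨x, Finset.mem_compl.2 hx⟩ = g ⟨y, Finset.mem_compl.2 hy⟩ := by
        apply Subtype.ext
        simpa [hF, dif_neg hx, dif_neg hy] using hxy
      simpa using g.injective this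
  have hbij : Function.Bijective F :=
    (Fintype.bijective_iff_injective_and_card F).2 ⟨hinj, h⟩
  exact ⟨Equiv.ofBijective F hbij, fun a ha => hFval a ha⟩

lemma card_fin_lt (n c : ℕ) (h : c ≤ n) : Fintype.card {y : Fin n // y.val < c} = c := by
  have e : {y : Fin n // y.val < c} ≃ Fin c :=
    { toFun := fun y => ⟨y.1.1, y.2⟩
      invFun := fun i => ⟨⟨i.1, lt_of_lt_of_le i.2 h⟩, i.2⟩
      left_inv := fun y => by ext; rfl
      right_inv := fun i => rfl }
  rw [Fintype.card_congr e, Fintype.card_fin]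

lemma exists_part_bij {V : Type*} [Fintype V] (n m k : ℕ)
    (hn : Fintype.card V = n) (T : Finset V) (hT : T.card = n - m)
    (hm2 : 2 * m ≤ n) (hkm : k ≤ m) (hm0 : 1 ≤ m)
    (C : Finset (Sym2 V))
    (p1 p2 : Sym2 V → V) (ix : Sym2 V → ℕ)
    (hp : ∀ c ∈ C, p1 c ∈ T ∧ p2 c ∉ T ∧ c = s(p1 c, p2 c))
    (hix : ∀ c ∈ C, ix c < k)
    (hixinj : Set.InjOn ix ↑C)
    (hdisj : ∀ c ∈ C, ∀ c' ∈ C, ∀ v : V, v ∈ c → v ∈ c' → c = c') :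
    ∃ e : V ≃ Fin n, (∀ x : V, x ∈ T ↔ (e x).val < n - m) ∧
      ∀ c ∈ C, (e (p1 c)).val = ix c ∧ (e (p2 c)).val = n - m + ix c := by
  classical
  have hmn : m ≤ n - m := by omega
  have hkn : k ≤ n - m := le_trans hkm hmn
  have hnm1 : 1 ≤ n - m := le_trans hm0 hmn
  have hmln : m ≤ n := by omega
  -- membership facts
  have hmemgen : ∀ (a b : V) (z : Sym2 V), z = s(a, b) → a ∈ z ∧ b ∈ z := by
    rintro a b z rfl
    exact ⟨Sym2.mem_mk_left _ _, Sym2.mem_mk_right _ _⟩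
  have hmem1 : ∀ c ∈ C, p1 c ∈ c := fun c hc => (hmemgen _ _ _ (hp c hc).2.2).1
  have hmem2 : ∀ c ∈ C, p2 c ∈ c := fun c hc => (hmemgen _ _ _ (hp c hc).2.2).2
  -- part 1 bijection
  have hcard1 : Fintype.card {x // x ∈ T} = Fintype.card {y : Fin n // y.val < n - m} := by
    rw [Fintype.card_coe, hT, card_fin_lt n (n - m) (by omega)]
  set A1 : Finset {x // x ∈ T} := Finset.univ.filter (fun a => ∃ c ∈ C, p1 c = ↑a) with hA1
  set f1 : {x // x ∈ T} → {y : Fin n // y.val < n - m} := fun a =>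
    if h : ∃ c ∈ C, p1 c = ↑a then
      ⟨⟨ix h.choose, by
        have := h.choose_spec.1
        have := hix _ this
        omega⟩, by
        have := h.choose_spec.1
        have := hix _ this
        simpa using by omega⟩
    else ⟨⟨0, by omega⟩, by simpa using by omega⟩ with hf1
  have hchoose1 : ∀ c ∈ C, ∀ (h : ∃ c' ∈ C, p1 c' = p1 c), h.choose = c := by
    intro c hc h
    obtain ⟨hc', heq⟩ := h.choose_spec
    have hm := hmem1 _ hc'
    rw [heq] at hm
    exact hdisj _ hc' _ hc (p1 c) hm (hmem1 _ hc)
  have hf1val : ∀ c ∈ C, ∀ (ht : p1 c ∈ T), (f1 ⟨p1 c, ht⟩).1.val = ix c := by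
    intro c hc ht
    have h : ∃ c' ∈ C, p1 c' = ↑(⟨p1 c, ht⟩ : {x // x ∈ T}) := ⟨c, hc, rfl⟩
    simp only [hf1, dif_pos h]
    rw [hchoose1 c hc h]
  have hinj1 : Set.InjOn f1 ↑A1 := by
    intro a ha a' ha' heq
    simp only [hA1, Finset.coe_filter, Set.mem_setOf_eq] at ha ha'
    obtain ⟨-, c, hc, hca⟩ := ha
    obtain ⟨-, c', hc', hca'⟩ := ha'
    have h : ∃ c0 ∈ C, p1 c0 = ↑a := ⟨c, hc, hca⟩
    have h' : ∃ c0 ∈ C, p1 c0 = ↑a' := ⟨c', hc', hca'⟩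
    simp only [hf1, dif_pos h, dif_pos h'] at heq
    have hixeq : ix h.choose = ix h'.choose := by
      have := congrArg (fun z => z.1.val) heq
      simpa using this
    have : h.choose = h'.choose :=
      hixinj (h.choose_spec.1) (h'.choose_spec.1) hixeq
    have := h.choose_spec.2
    rw [this] at *
    exact Subtype.ext (by rw [← h.choose_spec.2, ‹h.choose = h'.choose›, h'.choose_spec.2])
  obtain ⟨e1, he1⟩ := extendInjOn hcard1 A1 f1 hinj1
  -- part 2 bijection
  have hcard2 : Fintype.card {x // ¬ x ∈ T} = Fintype.card {y : Fin n // ¬ y.val < n - m} := by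
    rw [Fintype.card_subtype_compl, Fintype.card_subtype_compl, Fintype.card_coe, hT,
      card_fin_lt n (n - m) (by omega), hn, Fintype.card_fin]
  set A2 : Finset {x // ¬ x ∈ T} := Finset.univ.filter (fun a => ∃ c ∈ C, p2 c = ↑a) with hA2
  set f2 : {x // ¬ x ∈ T} → {y : Fin n // ¬ y.val < n - m} := fun a =>
    if h : ∃ c ∈ C, p2 c = ↑a then
      ⟨⟨n - m + ix h.choose, by
        have := hix _ h.choose_spec.1
        omega⟩, by simp⟩
    else ⟨⟨n - m, by omega⟩, by simp⟩ with hf2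
  have hchoose2 : ∀ c ∈ C, ∀ (h : ∃ c' ∈ C, p2 c' = p2 c), h.choose = c := by
    intro c hc h
    obtain ⟨hc', heq⟩ := h.choose_spec
    have hm := hmem2 _ hc'
    rw [heq] at hm
    exact hdisj _ hc' _ hc (p2 c) hm (hmem2 _ hc)
  have hf2val : ∀ c ∈ C, ∀ (ht : ¬ p2 c ∈ T), (f2 ⟨p2 c, ht⟩).1.val = n - m + ix c := by
    intro c hc ht
    have h : ∃ c' ∈ C, p2 c' = ↑(⟨p2 c, ht⟩ : {x // ¬ x ∈ T}) := ⟨c, hc, rfl⟩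
    simp only [hf2, dif_pos h]
    rw [hchoose2 c hc h]
  have hinj2 : Set.InjOn f2 ↑A2 := by
    intro a ha a' ha' heq
    simp only [hA2, Finset.coe_filter, Set.mem_setOf_eq] at ha ha'
    obtain ⟨-, c, hc, hca⟩ := ha
    obtain ⟨-, c', hc', hca'⟩ := ha'
    have h : ∃ c0 ∈ C, p2 c0 = ↑a := ⟨c, hc, hca⟩
    have h' : ∃ c0 ∈ C, p2 c0 = ↑a' := ⟨c', hc', hca'⟩
    simp only [hf2, dif_pos h, dif_pos h'] at heq
    have hixeq : ix h.choose = ix h'.choose := by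
      have := congrArg (fun z => z.1.val) heq
      simp only at this
      omega
    have : h.choose = h'.choose :=
      hixinj (h.choose_spec.1) (h'.choose_spec.1) hixeq
    exact Subtype.ext (by rw [← h.choose_spec.2, this, h'.choose_spec.2])
  obtain ⟨e2, he2⟩ := extendInjOn hcard2 A2 f2 hinj2
  -- glue
  set e : V ≃ Fin n :=
    ((Equiv.sumCompl (fun x : V => x ∈ T)).symm.trans
      ((e1.sumCongr e2).trans (Equiv.sumCompl (fun y : Fin n => y.val < n - m)))) with he
  have heval_pos : ∀ x : V, ∀ (hx : x ∈ T), e x = (e1 ⟨x, hx⟩ : Fin n) := by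
    intro x hx
    simp only [he, Equiv.trans_apply, Equiv.sumCompl_symm_apply_of_pos hx,
      Equiv.sumCongr_apply, Sum.map_inl, Equiv.sumCompl_apply_inl]
  have heval_neg : ∀ x : V, ∀ (hx : ¬ x ∈ T), e x = (e2 ⟨x, hx⟩ : Fin n) := by
    intro x hx
    simp only [he, Equiv.trans_apply, Equiv.sumCompl_symm_apply_of_neg hx,
      Equiv.sumCongr_apply, Sum.map_inr, Equiv.sumCompl_apply_inr]
  refine ⟨e, ?_, ?_⟩
  · intro x
    constructor
    · intro hx; rw [heval_pos x hx]; exact (e1 ⟨x, hx⟩).2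
    · intro hlt
      by_contra hx
      rw [heval_neg x hx] at hlt
      exact (e2 ⟨x, hx⟩).2 hlt
  · intro c hc
    have h1T := (hp c hc).1
    have h2T := (hp c hc).2.1
    constructor
    · rw [heval_pos _ h1T, he1 _ (by simp only [hA1, Finset.mem_filter]; exact ⟨Finset.mem_univ _, c, hc, rfl⟩)]
      exact hf1val c hc h1T
    · rw [heval_neg _ h2T, he2 _ (by simp only [hA2, Finset.mem_filter]; exact ⟨Finset.mem_univ _, c, hc, rfl⟩)]
      exact hf2val c hc h2T

lemma main_count {V : Type*} [Fintype V] (G : SimpleGraph V) (n m k : ℕ)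
    (hn : Fintype.card V = n) (T : Finset V) (hT : T.card = n - m)
    (hm2 : 2 * m ≤ n) (hkm : k ≤ m) (hm0 : 1 ≤ m)
    (hcut : (edgeCut G ↑T).ncard = k) (t : ℕ) :
    matchCount G t ≤ matchCount (Kmk n m k) t := by
  classical
  have hmn : m ≤ n - m := by omega
  have hkn : k ≤ n - m := le_trans hkm hmn
  have hn1 : 1 ≤ n := by omega
  have hVne : Nonempty V := by
    rw [← Fintype.card_pos_iff, hn]; omega
  -- the cut as a finset
  set cut : Finset (Sym2 V) := (Set.toFinite (edgeCut G ↑T)).toFinset with hcutdef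
  have hmemcut : ∀ e, e ∈ cut ↔ e ∈ edgeCut G ↑T := fun e => Set.Finite.mem_toFinset _
  have hcutcard : cut.card = k := by
    rw [hcutdef, ← Set.ncard_eq_toFinset_card _ (Set.toFinite _)]; exact hcut
  -- index function
  have hcardcut : Fintype.card ↥cut = k := by rw [Fintype.card_coe, hcutcard]
  set eqv : ↥cut ≃ Fin k := Fintype.equivFinOfCardEq hcardcut with heqv
  set ix : Sym2 V → ℕ := fun c => if h : c ∈ cut then (eqv ⟨c, h⟩ : ℕ) else 0 with hixdef
  have hix_lt : ∀ c ∈ cut, ix c < k := by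
    intro c hc; simp only [hixdef, dif_pos hc]; exact (eqv ⟨c, hc⟩).2
  have hix_inj : Set.InjOn ix ↑cut := by
    intro c hc c' hc' heq
    simp only [Finset.mem_coe] at hc hc'
    simp only [hixdef, dif_pos hc, dif_pos hc'] at heq
    have : eqv ⟨c, hc⟩ = eqv ⟨c', hc'⟩ := Fin.ext heq
    simpa using eqv.injective this
  -- endpoints
  set pk : Sym2 V → V × V := fun c =>
    if h : ∃ p : V × V, p.1 ∈ T ∧ p.2 ∉ T ∧ c = s(p.1, p.2) then h.choose
    else (Classical.arbitrary V, Classical.arbitrary V) with hpkdef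
  set p1 : Sym2 V → V := fun c => (pk c).1 with hp1def
  set p2 : Sym2 V → V := fun c => (pk c).2 with hp2def
  have hpk : ∀ c ∈ cut, p1 c ∈ T ∧ p2 c ∉ T ∧ c = s(p1 c, p2 c) := by
    intro c hc
    obtain ⟨he, u, hu, v, hv, hcuv⟩ := (hmemcut c).1 hc
    have h : ∃ p : V × V, p.1 ∈ T ∧ p.2 ∉ T ∧ c = s(p.1, p.2) := ⟨(u, v), hu, hv, hcuv⟩
    simp only [hp1def, hp2def, hpkdef, dif_pos h]
    exact h.choose_spec
  have hmemgen : ∀ (a b : V) (z : Sym2 V), z = s(a, b) → a ∈ z ∧ b ∈ z := by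
    rintro a b z rfl
    exact ⟨Sym2.mem_mk_left _ _, Sym2.mem_mk_right _ _⟩
  -- the "model edge" function
  set fn : ℕ → Fin n := fun i => ⟨min i (n - 1), by omega⟩ with hfndef
  have hfn : ∀ i, i < n → (fn i).val = i := by intro i hi; simp only [hfndef]; omega
  set mE : Sym2 V → Sym2 (Fin n) := fun c => s(fn (ix c), fn (n - m + ix c)) with hmEdef
  have hfn1 : ∀ c ∈ cut, (fn (ix c)).val = ix c := by
    intro c hc; exact hfn _ (by have := hix_lt c hc; omega)
  have hfn2 : ∀ c ∈ cut, (fn (n - m + ix c)).val = n - m + ix c := by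
    intro c hc; exact hfn _ (by have := hix_lt c hc; omega)
  -- the bijection chooser
  set defE : V ≃ Fin n := Fintype.equivFinOfCardEq hn with hdefE
  set bijOf : Finset (Sym2 V) → (V ≃ Fin n) := fun C =>
    if h : C ⊆ cut ∧ ∀ c ∈ C, ∀ c' ∈ C, ∀ v : V, v ∈ c → v ∈ c' → c = c' then
      (exists_part_bij n m k hn T hT hm2 hkm hm0 C p1 p2 ix
        (fun c hc => hpk c (h.1 hc)) (fun c hc => hix_lt c (h.1 hc))
        (hix_inj.mono (by exact_mod_cast h.1)) h.2).choose
    else defE with hbijOfdef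
  have hbijOf : ∀ C : Finset (Sym2 V), (hsub : C ⊆ cut) →
      (hd : ∀ c ∈ C, ∀ c' ∈ C, ∀ v : V, v ∈ c → v ∈ c' → c = c') →
      (∀ x : V, x ∈ T ↔ ((bijOf C) x).val < n - m) ∧
      ∀ c ∈ C, ((bijOf C) (p1 c)).val = ix c ∧ ((bijOf C) (p2 c)).val = n - m + ix c := by
    intro C hsub hd
    have h : C ⊆ cut ∧ ∀ c ∈ C, ∀ c' ∈ C, ∀ v : V, v ∈ c → v ∈ c' → c = c' := ⟨hsub, hd⟩
    simp only [hbijOfdef, dif_pos h]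
    exact (exists_part_bij n m k hn T hT hm2 hkm hm0 C p1 p2 ix
        (fun c hc => hpk c (h.1 hc)) (fun c hc => hix_lt c (h.1 hc))
        (hix_inj.mono (by exact_mod_cast h.1)) h.2).choose_spec
  -- now the map on matchings
  set Φraw : Finset (Sym2 V) → Finset (Sym2 (Fin n)) := fun M =>
    M.image (Sym2.map (bijOf (M ∩ cut))) with hΦrawdef
  -- matchings predicate
  set mp : Finset (Sym2 V) → Prop := fun M => ↑M ⊆ G.edgeSet ∧ M.card = t ∧
    (M : Set (Sym2 V)).Pairwise fun e f => ∀ v, ¬(v ∈ e ∧ v ∈ f) with hmpdef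
  have hdisjM : ∀ M : Finset (Sym2 V), mp M →
      ∀ c ∈ M, ∀ c' ∈ M, ∀ v : V, v ∈ c → v ∈ c' → c = c' := by
    intro M hM c hc c' hc' v hvc hvc'
    by_contra hne
    exact hM.2.2 (Finset.mem_coe.2 hc) (Finset.mem_coe.2 hc') hne v ⟨hvc, hvc'⟩
  have hCsub : ∀ M : Finset (Sym2 V), M ∩ cut ⊆ cut := fun M => Finset.inter_subset_right
  have hCd : ∀ M : Finset (Sym2 V), mp M →
      ∀ c ∈ M ∩ cut, ∀ c' ∈ M ∩ cut, ∀ v : V, v ∈ c → v ∈ c' → c = c' := by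
    intro M hM c hc c' hc' v hvc hvc'
    exact hdisjM M hM c (Finset.mem_of_mem_inter_left hc) c'
      (Finset.mem_of_mem_inter_left hc') v hvc hvc'
  -- map equation on cut edges in M
  have hmapeq : ∀ M : Finset (Sym2 V), mp M → ∀ c ∈ M ∩ cut,
      Sym2.map (bijOf (M ∩ cut)) c = mE c := by
    intro M hM c hc
    obtain ⟨hP1, hP2⟩ := hbijOf (M ∩ cut) (hCsub M) (hCd M hM)
    have hccut : c ∈ cut := Finset.mem_of_mem_inter_right hc
    have hceq := (hpk c hccut).2.2
    obtain ⟨hv1, hv2⟩ := hP2 c hc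
    conv_lhs => rw [hceq]
    rw [Sym2.map_pair_eq, hmEdef]
    rw [Sym2.eq_iff]
    left
    constructor
    · exact Fin.ext (by rw [hv1, hfn1 c hccut])
    · exact Fin.ext (by rw [hv2, hfn2 c hccut])
  -- characterization of cut edges from the image
  have hchar : ∀ M : Finset (Sym2 V), mp M →
      M ∩ cut = cut.filter (fun c => mE c ∈ Φraw M) := by
    intro M hM
    apply Finset.ext
    intro c
    simp only [Finset.mem_filter]
    constructor
    · intro hc
      refine ⟨Finset.mem_of_mem_inter_right hc, ?_⟩
      rw [← hmapeq M hM c hc]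
      exact Finset.mem_image_of_mem _ (Finset.mem_of_mem_inter_left hc)
    · rintro ⟨hccut, hmem⟩
      simp only [hΦrawdef, Finset.mem_image] at hmem
      obtain ⟨c₀, hc₀M, hc₀⟩ := hmem
      obtain ⟨hP1, hP2⟩ := hbijOf (M ∩ cut) (hCsub M) (hCd M hM)
      set φ := bijOf (M ∩ cut) with hφ
      -- the two endpoints of mE c
      have ha : fn (ix c) ∈ mE c := by
        rw [hmEdef]; exact Sym2.mem_mk_left _ _
      have hb : fn (n - m + ix c) ∈ mE c := by
        rw [hmEdef]; exact Sym2.mem_mk_right _ _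
      rw [← hc₀] at ha hb
      obtain ⟨x, hxc₀, hφx⟩ := Sym2.mem_map.1 ha
      obtain ⟨y, hyc₀, hφy⟩ := Sym2.mem_map.1 hb
      have hxT : x ∈ T := by
        rw [hP1]
        rw [hφx, hfn1 c hccut]
        exact hix_lt c hccut |>.trans_le hkn
      have hyT : y ∉ T := by
        rw [hP1]
        rw [hφy, hfn2 c hccut]
        omega
      have hxy : x ≠ y := fun hcon => hyT (hcon ▸ hxT)
      have hc₀eq : c₀ = s(x, y) := (Sym2.mem_and_mem_iff hxy).1 ⟨hxc₀, hyc₀⟩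
      have hc₀cut : c₀ ∈ cut := by
        refine (hmemcut c₀).2 ⟨hM.1 (Finset.mem_coe.2 hc₀M), x, hxT, y, hyT, hc₀eq⟩
      have hc₀MC : c₀ ∈ M ∩ cut := Finset.mem_inter.2 ⟨hc₀M, hc₀cut⟩
      have := hmapeq M hM c₀ hc₀MC
      rw [this] at hc₀
      -- mE c₀ = mE c implies ix c₀ = ix c
      have hixeq : ix c₀ = ix c := by
        rw [hmEdef] at hc₀
        rw [Sym2.eq_iff] at hc₀
        have h1 := hfn1 c hccut
        have h2 := hfn2 c hccut
        have h1' := hfn1 c₀ hc₀cut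
        have h2' := hfn2 c₀ hc₀cut
        have hlt := hix_lt c hccut
        have hlt' := hix_lt c₀ hc₀cut
        rcases hc₀ with ⟨hA, hB⟩ | ⟨hA, hB⟩
        · have := congrArg Fin.val hA; omega
        · have hA' := congrArg Fin.val hA
          rw [h1', h2] at hA'
          omega
      have : c₀ = c := hix_inj (Finset.mem_coe.2 hc₀cut) (Finset.mem_coe.2 hccut) hixeq
      rw [← this]
      exact hc₀MC
  -- image is a matching of Kmk
  have himg : ∀ M : Finset (Sym2 V), mp M →
      ↑(Φraw M) ⊆ (Kmk n m k).edgeSet ∧ (Φraw M).card = t ∧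
      ((Φraw M) : Set (Sym2 (Fin n))).Pairwise fun e f => ∀ v, ¬(v ∈ e ∧ v ∈ f) := by
    intro M hM
    obtain ⟨hP1, hP2⟩ := hbijOf (M ∩ cut) (hCsub M) (hCd M hM)
    set φ := bijOf (M ∩ cut) with hφ
    refine ⟨?_, ?_, ?_⟩
    · -- subset of edges
      intro e' he'
      simp only [hΦrawdef, Finset.coe_image, Set.mem_image, Finset.mem_coe] at he'
      obtain ⟨c₀, hc₀M, rfl⟩ := he'
      rw [← hφ]
      have hedge : c₀ ∈ G.edgeSet := hM.1 (Finset.mem_coe.2 hc₀M)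
      revert hedge hc₀M
      induction c₀ using Sym2.ind with
      | _ x y =>
        intro hc₀M hedge
        rw [SimpleGraph.mem_edgeSet] at hedge
        have hxy : x ≠ y := hedge.ne
        by_cases hxT : x ∈ T <;> by_cases hyT : y ∈ T
        · -- both in T
          rw [Sym2.map_pair_eq, SimpleGraph.mem_edgeSet]
          simp only [Kmk, SimpleGraph.fromRel_adj]
          refine ⟨fun hcon => hxy (φ.injective hcon), Or.inl (Or.inl ⟨?_, ?_⟩)⟩
          · exact (hP1 x).1 hxT
          · exact (hP1 y).1 hyT
        · -- x in T, y not: cut edge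
          have hccut : s(x, y) ∈ cut :=
            (hmemcut _).2 ⟨(SimpleGraph.mem_edgeSet _).2 hedge, x, hxT, y, hyT, rfl⟩
          have hcMC : s(x, y) ∈ M ∩ cut := Finset.mem_inter.2 ⟨hc₀M, hccut⟩
          have hmeq := hmapeq M hM _ hcMC
          rw [← hφ] at hmeq
          rw [hmeq, hmEdef, SimpleGraph.mem_edgeSet]
          simp only [Kmk, SimpleGraph.fromRel_adj]
          have h1 := hfn1 _ hccut
          have h2 := hfn2 _ hccut
          have hlt := hix_lt _ hccut
          refine ⟨fun hcon => ?_, Or.inl (Or.inr (Or.inr ⟨by omega, by omega⟩))⟩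
          · have := congrArg Fin.val hcon; omega
        · -- y in T, x not: cut edge reversed
          have hccut : s(x, y) ∈ cut := by
            refine (hmemcut _).2 ⟨(SimpleGraph.mem_edgeSet _).2 hedge, y, hyT, x, hxT, ?_⟩
            rw [Sym2.eq_swap]
          have hcMC : s(x, y) ∈ M ∩ cut := Finset.mem_inter.2 ⟨hc₀M, hccut⟩
          have hmeq := hmapeq M hM _ hcMC
          rw [← hφ] at hmeq
          rw [hmeq, hmEdef, SimpleGraph.mem_edgeSet]
          simp only [Kmk, SimpleGraph.fromRel_adj]
          have h1 := hfn1 _ hccut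
          have h2 := hfn2 _ hccut
          have hlt := hix_lt _ hccut
          refine ⟨fun hcon => ?_, Or.inl (Or.inr (Or.inr ⟨by omega, by omega⟩))⟩
          · have := congrArg Fin.val hcon; omega
        · -- both out of T
          rw [Sym2.map_pair_eq, SimpleGraph.mem_edgeSet]
          simp only [Kmk, SimpleGraph.fromRel_adj]
          have hx' : ¬ (φ x).val < n - m := fun h => hxT ((hP1 x).2 h)
          have hy' : ¬ (φ y).val < n - m := fun h => hyT ((hP1 y).2 h)
          exact ⟨fun hcon => hxy (φ.injective hcon),
            Or.inl (Or.inr (Or.inl ⟨by omega, by omega⟩))⟩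
    · -- card
      rw [hΦrawdef]
      rw [Finset.card_image_of_injective _ (Sym2.map.injective (bijOf (M ∩ cut)).injective)]
      exact hM.2.1
    · -- pairwise
      intro e' he' f' hf' hne v hv
      simp only [hΦrawdef, Finset.coe_image, Set.mem_image, Finset.mem_coe] at he' hf'
      obtain ⟨a, haM, rfl⟩ := he'
      obtain ⟨b, hbM, rfl⟩ := hf'
      obtain ⟨hva, hvb⟩ := hv
      obtain ⟨w, hwa, hφw⟩ := Sym2.mem_map.1 hva
      obtain ⟨w', hwb, hφw'⟩ := Sym2.mem_map.1 hvb
      have : w' = w := φ.injective (by rw [hφw, hφw'])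
      rw [this] at hwb
      exact hne (by rw [hdisjM M hM a haM b hbM w hwa hwb])
  -- final injection
  set Φ : {s : Finset (Sym2 V) // ↑s ⊆ G.edgeSet ∧ s.card = t ∧
      (s : Set (Sym2 V)).Pairwise fun e f => ∀ v, ¬(v ∈ e ∧ v ∈ f)} →
      {s : Finset (Sym2 (Fin n)) // ↑s ⊆ (Kmk n m k).edgeSet ∧ s.card = t ∧
      (s : Set (Sym2 (Fin n))).Pairwise fun e f => ∀ v, ¬(v ∈ e ∧ v ∈ f)} :=
    fun M => ⟨Φraw M.1, himg M.1 M.2⟩ with hΦ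
  have hΦinj : Function.Injective Φ := by
    rintro ⟨M, hM⟩ ⟨M', hM'⟩ heq
    simp only [hΦ, Subtype.mk.injEq] at heq ⊢
    have hC : M ∩ cut = M' ∩ cut := by
      rw [hchar M hM, hchar M' hM', heq]
    simp only [hΦrawdef] at heq
    rw [← hC] at heq
    exact Finset.image_injective (Sym2.map.injective (bijOf (M ∩ cut)).injective) heq
  exact Nat.card_le_card_of_injective Φ hΦinj

end Aux

/-- If `G` is connected of order `n` with edge connectivity `k` (`1 ≤ k ≤ n − 1`) and
has no trivial `k`-edge cut, then `m(G,t) ≤ m(K^k_{n-m,m},t)` for all `t ≤ ⌊n/2⌋`,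
for some `m` with `max{k,2} ≤ m ≤ ⌊n/2⌋`. -/
theorem stmt10 {V : Type*} [Fintype V] (G : SimpleGraph V) (n k : ℕ)
    (hn : Fintype.card V = n) (hG : G.Connected) (hk : edgeConn G = k)
    (hk1 : 1 ≤ k) (hk2 : k ≤ n - 1)
    (htriv : ¬ ∃ v : V, (edgeCut G {v}).ncard = k) :
    ∃ m : ℕ, max k 2 ≤ m ∧ m ≤ n / 2 ∧
      ∀ t : ℕ, t ≤ n / 2 → matchCount G t ≤ matchCount (Kmk n m k) t := by
  classical
  -- basic size facts
  have hVne : Nonempty V := hG.nonempty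
  have hn1 : 1 ≤ n := by rw [← hn]; exact Fintype.card_pos
  have hn2 : 2 ≤ n := by omega
  have hnontriv : Nontrivial V := by
    rw [← Fintype.one_lt_card_iff_nontrivial, hn]; omega
  -- degree lower bound
  have hdeg : ∀ v : V, k + 1 ≤ (edgeCut G {v}).ncard := by
    intro v
    obtain ⟨w, hw⟩ := exists_ne v
    have hle : k ≤ (edgeCut G {v}).ncard := by
      rw [← hk]
      exact edgeConn_le_cut G {v} ⟨v, rfl⟩ ⟨w, hw⟩
    have hne : (edgeCut G {v}).ncard ≠ k := fun hc => htriv ⟨v, hc⟩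
    omega
  -- minimum cut
  obtain ⟨S, hS, hS', hcutS⟩ := exists_min_cut G hnontriv
  rw [hk] at hcutS
  have hcutS' : (edgeCut G Sᶜ).ncard = k := by rw [edgeCut_compl]; exact hcutS
  -- both sides are large
  have hbig1 : k + 2 ≤ S.ncard := big G k S hdeg (le_of_eq hcutS) hS
  have hbig2 : k + 2 ≤ Sᶜ.ncard := big G k Sᶜ hdeg (le_of_eq hcutS') hS'
  have hcompl : S.ncard + Sᶜ.ncard = n := by
    rw [Set.ncard_add_ncard_compl S (Set.toFinite S) (Set.toFinite Sᶜ),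
      Nat.card_eq_fintype_card, hn]
  set s := S.ncard with hs
  have hsc : Sᶜ.ncard = n - s := by omega
  set m := min s (n - s) with hm
  refine ⟨m, ?_, ?_, ?_⟩
  · have : k + 2 ≤ m := by omega
    omega
  · omega
  · intro t ht
    -- choose the big side as T
    by_cases hcase : s ≤ n - s
    · have hmeq : m = s := by omega
      set T : Finset V := (Set.toFinite Sᶜ).toFinset with hTdef
      have hTcoe : ↑T = Sᶜ := Set.Finite.coe_toFinset _
      have hTcard : T.card = n - m := by
        rw [hmeq, hTdef, ← Set.ncard_eq_toFinset_card _ (Set.toFinite Sᶜ)]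
        omega
      have hcutT : (edgeCut G ↑T).ncard = k := by rw [hTcoe]; exact hcutS'
      exact main_count G n m k hn T hTcard (by omega) (by omega) (by omega) hcutT t
    · have hmeq : m = n - s := by omega
      set T : Finset V := (Set.toFinite S).toFinset with hTdef
      have hTcoe : ↑T = S := Set.Finite.coe_toFinset _
      have hTcard : T.card = n - m := by
        rw [hmeq, hTdef, ← Set.ncard_eq_toFinset_card _ (Set.toFinite S)]
        omega
      have hcutT : (edgeCut G ↑T).ncard = k := by rw [hTcoe]; exact hcutS
      exact main_count G n m k hn T hTcard (by omega) (by omega) (by omega) hcutT t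
end

section
/- For every positive integer m and every t = 0, 1, …, m: m(K^1_{m,m}, t) ≤ m(K^1_{2m-1,1}, t). -/
namespace Stmt12Aux

def wv (k : ℕ) : Fin (2*(k+2)) := ⟨2*k+3, by omega⟩
def zv (k : ℕ) : Fin (2*(k+2)) := ⟨0, by omega⟩
def cv (k : ℕ) : Fin (2*(k+2)) := ⟨k+2, by omega⟩

@[simp] lemma wv_val (k : ℕ) : (wv k).val = 2*k+3 := rfl
@[simp] lemma zv_val (k : ℕ) : (zv k).val = 0 := rfl
@[simp] lemma cv_val (k : ℕ) : (cv k).val = k+2 := rfl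

abbrev G1 (k : ℕ) := Kmk (2*(k+2)) (k+2) 1
abbrev G2 (k : ℕ) := Kstar (2*(k+2)) 1

def Good {V : Type*} (G : SimpleGraph V) (t : ℕ) (s : Finset (Sym2 V)) : Prop :=
  ↑s ⊆ G.edgeSet ∧ s.card = t ∧
    (s : Set (Sym2 V)).Pairwise fun e f => ∀ v, ¬(v ∈ e ∧ v ∈ f)

lemma matchCount_eq {V : Type*} (G : SimpleGraph V) (t : ℕ) :
    matchCount G t = Nat.card {s // Good G t s} := rfl

variable {k : ℕ}

lemma g1_adj {a b : Fin (2*(k+2))} :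
    (G1 k).Adj a b ↔ a ≠ b ∧
      ((a.val ≤ k+1 ∧ b.val ≤ k+1) ∨ (k+2 ≤ a.val ∧ k+2 ≤ b.val) ∨
       (a.val = 0 ∧ b.val = k+2) ∨ (b.val = 0 ∧ a.val = k+2)) := by
  simp only [Kmk, SimpleGraph.fromRel_adj]
  constructor
  · rintro ⟨h, h2⟩; exact ⟨h, by omega⟩
  · rintro ⟨h, h2⟩; exact ⟨h, by omega⟩

lemma g2_adj {a b : Fin (2*(k+2))} :
    (G2 k).Adj a b ↔ a ≠ b ∧
      ((a.val ≤ 2*k+2 ∧ b.val ≤ 2*k+2) ∨ (a.val = 0 ∧ b.val = 2*k+3) ∨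
       (b.val = 0 ∧ a.val = 2*k+3)) := by
  simp only [Kstar, SimpleGraph.fromRel_adj]
  constructor
  · rintro ⟨h, h2⟩; exact ⟨h, by omega⟩
  · rintro ⟨h, h2⟩; exact ⟨h, by omega⟩

lemma partner_exists {V : Type*} {G : SimpleGraph V} {M : Finset (Sym2 V)}
    (hsub : ↑M ⊆ G.edgeSet) {e : Sym2 V} {x : V} (he : e ∈ M) (hx : x ∈ e) :
    ∃ y, y ≠ x ∧ s(y, x) ∈ M := by
  refine ⟨Sym2.Mem.other hx, ?_, ?_⟩
  · intro hh
    have hE : e ∈ G.edgeSet := hsub (Finset.mem_coe.2 he)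
    have hd := G.not_isDiag_of_mem_edgeSet hE
    rw [← Sym2.other_spec hx, hh] at hd
    exact hd (Sym2.mk_isDiag_iff.2 rfl)
  · have : s(Sym2.Mem.other hx, x) = e := Sym2.eq_swap.trans (Sym2.other_spec hx)
    rw [this]; exact he

lemma g2_edge_of {e : Sym2 (Fin (2*(k+2)))} (h : e ∈ (G1 k).edgeSet)
    (hwe : wv k ∉ e) : e ∈ (G2 k).edgeSet := by
  revert h hwe
  induction e using Sym2.ind with
  | _ a b =>
    intro h hwe
    simp only [Sym2.mem_iff, not_or] at hwe
    obtain ⟨hne, _⟩ := g1_adj.1 ((SimpleGraph.mem_edgeSet _).1 h)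
    refine (SimpleGraph.mem_edgeSet _).2 (g2_adj.2 ⟨hne, Or.inl ⟨?_, ?_⟩⟩)
    · have := a.isLt
      have : a.val ≠ 2*k+3 := fun hh => hwe.1 (Fin.ext hh).symm
      omega
    · have := b.isLt
      have : b.val ≠ 2*k+3 := fun hh => hwe.2 (Fin.ext hh).symm
      omega

lemma g2_edge_zw : s(zv k, wv k) ∈ (G2 k).edgeSet := by
  refine (SimpleGraph.mem_edgeSet _).2 (g2_adj.2 ⟨?_, Or.inr (Or.inl ⟨rfl, rfl⟩)⟩)
  intro hh; have := congrArg Fin.val hh; simp at this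

lemma g2_edge_of_le {a b : Fin (2*(k+2))} (hne : a ≠ b) (ha : a.val ≤ 2*k+2)
    (hb : b.val ≤ 2*k+2) : s(a, b) ∈ (G2 k).edgeSet :=
  (SimpleGraph.mem_edgeSet _).2 (g2_adj.2 ⟨hne, Or.inl ⟨ha, hb⟩⟩)


open Classical in
noncomputable def fmap (k : ℕ) (M : Finset (Sym2 (Fin (2*(k+2))))) :
    Finset (Sym2 (Fin (2*(k+2)))) :=
  if hw : ∃ v, v ≠ wv k ∧ s(v, wv k) ∈ M then
    if hz : ∃ u, u ≠ zv k ∧ s(u, zv k) ∈ M then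
      ((M.erase s(hw.choose, wv k)).erase s(hz.choose, zv k)) ∪
        {s(zv k, wv k), s(hz.choose, hw.choose)}
    else if hw.choose = cv k then
      (M.erase s(hw.choose, wv k)) ∪ {s(zv k, wv k)}
    else
      (M.erase s(hw.choose, wv k)) ∪ {s(zv k, hw.choose)}
  else M

open Classical in
noncomputable def gmap (k : ℕ) (M : Finset (Sym2 (Fin (2*(k+2))))) :
    Finset (Sym2 (Fin (2*(k+2)))) :=
  if h1 : ∃ v, k+2 < v.val ∧ v ≠ wv k ∧ s(zv k, v) ∈ M then
    (M.erase s(zv k, h1.choose)) ∪ {s(h1.choose, wv k)}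
  else if s(zv k, wv k) ∈ M then
    if h3 : ∃ p : Fin (2*(k+2)) × Fin (2*(k+2)), p.1 ≠ zv k ∧ p.1.val ≤ k+1 ∧
        k+2 ≤ p.2.val ∧ p.2 ≠ wv k ∧ s(p.1, p.2) ∈ M then
      ((M.erase s(zv k, wv k)).erase s(h3.choose.1, h3.choose.2)) ∪
        {s(h3.choose.1, zv k), s(h3.choose.2, wv k)}
    else if h4 : ∃ v, v ≠ cv k ∧ s(cv k, v) ∈ M then
      ((M.erase s(zv k, wv k)).erase s(cv k, h4.choose)) ∪
        {s(zv k, cv k), s(h4.choose, wv k)}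
    else
      (M.erase s(zv k, wv k)) ∪ {s(cv k, wv k)}
  else M

set_option pp.proofs true in
lemma fmap_spec {t : ℕ} {M : Finset (Sym2 (Fin (2*(k+2))))} (h : Good (G1 k) t M) :
    Good (G2 k) t (fmap k M) ∧ gmap k (fmap k M) = M := by
  obtain ⟨hsub, hcard, hpair⟩ := h
  have hdisj : ∀ ⦃e f : Sym2 (Fin (2*(k+2)))⦄, e ∈ M → f ∈ M → e ≠ f →
      ∀ x : Fin (2*(k+2)), x ∈ e → x ∈ f → False := by
    intro e f he hf hne x h1 h2
    exact hpair (Finset.mem_coe.2 he) (Finset.mem_coe.2 hf) hne x ⟨h1, h2⟩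
  have hshape : ∀ a b : Fin (2*(k+2)), s(a,b) ∈ M → a ≠ b ∧
      ((a.val ≤ k+1 ∧ b.val ≤ k+1) ∨ (k+2 ≤ a.val ∧ k+2 ≤ b.val) ∨
       (a.val = 0 ∧ b.val = k+2) ∨ (b.val = 0 ∧ a.val = k+2)) :=
    fun a b hab => g1_adj.1 ((SimpleGraph.mem_edgeSet _).1 (hsub (Finset.mem_coe.2 hab)))
  have hzw : zv k ≠ wv k := by intro hh; have := congrArg Fin.val hh; simp at this
  have hzc : zv k ≠ cv k := by intro hh; have := congrArg Fin.val hh; simp at this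
  have hcw : cv k ≠ wv k := by intro hh; have := congrArg Fin.val hh; simp at this; omega
  by_cases hw : ∃ v, v ≠ wv k ∧ s(v, wv k) ∈ M
  · set v := hw.choose with hvdef
    obtain ⟨hvw, hvM⟩ := hw.choose_spec
    have hvval : k+2 ≤ v.val ∧ v.val ≤ 2*k+2 := by
      have hs := (hshape _ _ hvM).2
      have hlt := v.isLt
      have hne : v.val ≠ 2*k+3 := fun hh => hvw (Fin.ext hh)
      simp only [wv_val] at hs
      omega
    obtain ⟨hvval1, hvval2⟩ := hvval
    have hvz : v ≠ zv k := by
      intro hh; have := congrArg Fin.val hh; simp only [zv_val] at this; omega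
    have hnw : ∀ e ∈ M, e ≠ s(v, wv k) → wv k ∉ e := by
      intro e he hne hmem
      exact hdisj he hvM hne (wv k) hmem (Sym2.mem_iff.2 (Or.inr rfl))
    have hnv : ∀ e ∈ M, e ≠ s(v, wv k) → v ∉ e := by
      intro e he hne hmem
      exact hdisj he hvM hne v hmem (Sym2.mem_iff.2 (Or.inl rfl))
    by_cases hz : ∃ u, u ≠ zv k ∧ s(u, zv k) ∈ M
    · -- case (c)
      set u := hz.choose with hudef
      obtain ⟨huz, huM⟩ := hz.choose_spec
      have huval : u.val ≤ k+2 := by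
        have hs := (hshape _ _ huM).2
        have h0 : u.val ≠ 0 := fun hh => huz (Fin.ext hh)
        simp only [zv_val] at hs
        omega
      have huw : u ≠ wv k := by
        intro hh; have := congrArg Fin.val hh; simp only [wv_val] at this; omega
      have hedne : s(u, zv k) ≠ s(v, wv k) := by
        intro heq
        rcases Sym2.eq_iff.1 heq with ⟨-, h2⟩ | ⟨h1, -⟩
        · exact hzw h2
        · exact huw h1
      have huv : u ≠ v := by
        intro hh
        exact hdisj huM hvM hedne u (Sym2.mem_iff.2 (Or.inl rfl))
          (Sym2.mem_iff.2 (Or.inl hh))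
      have hnz : ∀ e ∈ M, e ≠ s(u, zv k) → zv k ∉ e := by
        intro e he hne hmem
        exact hdisj he huM hne (zv k) hmem (Sym2.mem_iff.2 (Or.inr rfl))
      have hnu : ∀ e ∈ M, e ≠ s(u, zv k) → u ∉ e := by
        intro e he hne hmem
        exact hdisj he huM hne u hmem (Sym2.mem_iff.2 (Or.inl rfl))
      have hzwM : s(zv k, wv k) ∉ M := by
        intro hmem
        refine hnw _ hmem ?_ (Sym2.mem_iff.2 (Or.inr rfl))
        intro heq
        rcases Sym2.eq_iff.1 heq with ⟨h1, -⟩ | ⟨h1, -⟩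
        · exact hvz h1.symm
        · exact hzw h1
      have huvM : s(u, v) ∉ M := by
        intro hmem
        refine hnu _ hmem ?_ (Sym2.mem_iff.2 (Or.inl rfl))
        intro heq
        rcases Sym2.eq_iff.1 heq with ⟨-, h2⟩ | ⟨h1, -⟩
        · exact hvz h2
        · exact huz h1
      have hc1 : s(u, zv k) ∈ M.erase s(v, wv k) := Finset.mem_erase.2 ⟨hedne, huM⟩
      have hfm : fmap k M = ((M.erase s(v, wv k)).erase s(u, zv k)) ∪
          {s(zv k, wv k), s(u, v)} := by
        rw [fmap, dif_pos hw, dif_pos hz]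
      have hEfact : ∀ e ∈ (M.erase s(v, wv k)).erase s(u, zv k),
          e ∈ M ∧ wv k ∉ e ∧ zv k ∉ e ∧ u ∉ e ∧ v ∉ e := by
        intro e he
        obtain ⟨hne2, he⟩ := Finset.mem_erase.1 he
        obtain ⟨hne1, heM⟩ := Finset.mem_erase.1 he
        exact ⟨heM, hnw e heM hne1, hnz e heM hne2, hnu e heM hne2, hnv e heM hne1⟩
      have hzwuv : s(zv k, wv k) ≠ s(u, v) := by
        intro heq
        rcases Sym2.eq_iff.1 heq with ⟨h1, -⟩ | ⟨-, h2⟩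
        · exact huz h1.symm
        · exact huw h2.symm
      constructor
      · rw [hfm]
        refine ⟨?_, ?_, ?_⟩
        · intro e he
          simp only [Finset.coe_union, Set.mem_union, Finset.mem_coe, Finset.coe_insert,
            Set.mem_insert_iff, Finset.coe_singleton, Set.mem_singleton_iff] at he
          rcases he with he | rfl | rfl
          · obtain ⟨heM, hwe, -⟩ := hEfact e he
            exact g2_edge_of (hsub (Finset.mem_coe.2 heM)) hwe
          · exact g2_edge_zw
          · exact g2_edge_of_le huv (by omega) (by omega)
        · have hdisj2 : Disjoint ((M.erase s(v, wv k)).erase s(u, zv k))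
              ({s(zv k, wv k), s(u, v)} : Finset _) := by
            rw [Finset.disjoint_right]
            intro a ha
            rcases Finset.mem_insert.1 ha with rfl | ha
            · intro hcon
              exact ((hEfact _ hcon).2.1) (Sym2.mem_iff.2 (Or.inr rfl))
            · rw [Finset.mem_singleton.1 ha]
              intro hcon
              exact ((hEfact _ hcon).2.2.2.1) (Sym2.mem_iff.2 (Or.inl rfl))
          rw [Finset.card_union_of_disjoint hdisj2, Finset.card_erase_of_mem hc1,
            Finset.card_erase_of_mem hvM, Finset.card_pair hzwuv, hcard]
          have h2t : 2 ≤ t := by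
            rw [← hcard]
            exact Finset.one_lt_card.2 ⟨_, hvM, _, huM, Ne.symm hedne⟩
          omega
        · intro e he f hf hef x hx
          obtain ⟨hxe, hxf⟩ := hx
          simp only [Finset.coe_union, Set.mem_union, Finset.mem_coe, Finset.coe_insert,
            Set.mem_insert_iff, Finset.coe_singleton, Set.mem_singleton_iff] at he hf
          have key1 : ∀ g ∈ (M.erase s(v, wv k)).erase s(u, zv k),
              x ∈ g → x ∈ s(zv k, wv k) → False := by
            intro g hg hxg hxs
            obtain ⟨-, hwg, hzg, -, -⟩ := hEfact g hg
            rcases Sym2.mem_iff.1 hxs with rfl | rfl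
            · exact hzg hxg
            · exact hwg hxg
          have key2 : ∀ g ∈ (M.erase s(v, wv k)).erase s(u, zv k),
              x ∈ g → x ∈ s(u, v) → False := by
            intro g hg hxg hxs
            obtain ⟨-, -, -, hug, hvg⟩ := hEfact g hg
            rcases Sym2.mem_iff.1 hxs with rfl | rfl
            · exact hug hxg
            · exact hvg hxg
          have key3 : x ∈ s(zv k, wv k) → x ∈ s(u, v) → False := by
            intro h1 h2
            rcases Sym2.mem_iff.1 h1 with rfl | rfl <;>
              rcases Sym2.mem_iff.1 h2 with h2' | h2'
            · exact huz h2'.symm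
            · exact hvz h2'.symm
            · exact huw h2'.symm
            · exact hvw h2'.symm
          rcases he with he | rfl | rfl <;> rcases hf with hf | rfl | rfl
          · exact hdisj (hEfact e he).1 (hEfact f hf).1 hef x hxe hxf
          · exact key1 e he hxe hxf
          · exact key2 e he hxe hxf
          · exact key1 f hf hxf hxe
          · exact hef rfl
          · exact key3 hxe hxf
          · exact key2 f hf hxf hxe
          · exact key3 hxf hxe
          · exact hef rfl
      · have hA : ¬∃ v', k+2 < v'.val ∧ v' ≠ wv k ∧
            s(zv k, v') ∈ ((M.erase s(v, wv k)).erase s(u, zv k)) ∪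
              {s(zv k, wv k), s(u, v)} := by
          rintro ⟨v', hv1, hv2, hv3⟩
          rcases Finset.mem_union.1 hv3 with h3 | h3
          · exact (hEfact _ h3).2.2.1 (Sym2.mem_iff.2 (Or.inl rfl))
          · rcases Finset.mem_insert.1 h3 with heq | heq
            · rcases Sym2.eq_iff.1 heq with ⟨-, h2⟩ | ⟨h1, -⟩
              · exact hv2 h2
              · exact hzw h1
            · rcases Sym2.eq_iff.1 (Finset.mem_singleton.1 heq) with ⟨h1, -⟩ | ⟨h1, -⟩
              · exact huz h1.symm
              · exact hvz h1.symm
        have hB : s(zv k, wv k) ∈ ((M.erase s(v, wv k)).erase s(u, zv k)) ∪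
            {s(zv k, wv k), s(u, v)} :=
          Finset.mem_union_right _ (Finset.mem_insert_self _ _)
        rcases Nat.lt_or_ge u.val (k+2) with hult | huge
        · -- subcase (c1): u in the first clique
          have hC : ∃ p : Fin (2*(k+2)) × Fin (2*(k+2)), p.1 ≠ zv k ∧ p.1.val ≤ k+1 ∧
              k+2 ≤ p.2.val ∧ p.2 ≠ wv k ∧
              s(p.1, p.2) ∈ ((M.erase s(v, wv k)).erase s(u, zv k)) ∪
                {s(zv k, wv k), s(u, v)} :=
            ⟨(u, v), huz, Nat.lt_succ_iff.1 hult, hvval1, hvw,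
              Finset.mem_union_right _ (Finset.mem_insert_of_mem (Finset.mem_singleton_self _))⟩
          have huniq : ∀ u' v', u' ≠ zv k → u'.val ≤ k+1 → k+2 ≤ v'.val → v' ≠ wv k →
              s(u', v') ∈ ((M.erase s(v, wv k)).erase s(u, zv k)) ∪
                {s(zv k, wv k), s(u, v)} →
              u' = u ∧ v' = v := by
            intro u' v' h1 h2 h3 h4 h5
            rcases Finset.mem_union.1 h5 with h5 | h5
            · obtain ⟨heM, -, -, -, -⟩ := hEfact _ h5
              have hs := (hshape _ _ heM).2
              have h0 : u'.val ≠ 0 := fun hh => h1 (Fin.ext hh)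
              omega
            · rcases Finset.mem_insert.1 h5 with heq | heq
              · rcases Sym2.eq_iff.1 heq with ⟨hh1, -⟩ | ⟨hh1, -⟩
                · exact (h1 hh1).elim
                · rw [hh1] at h2; simp only [wv_val] at h2; omega
              · rcases Sym2.eq_iff.1 (Finset.mem_singleton.1 heq) with ⟨hh1, hh2⟩ | ⟨hh1, hh2⟩
                · exact ⟨hh1, hh2⟩
                · rw [hh1] at h2; omega
          have hcp : hC.choose = (u, v) := by
            obtain ⟨h1, h2, h3, h4, h5⟩ := hC.choose_spec
            obtain ⟨hh1, hh2⟩ := huniq _ _ h1 h2 h3 h4 h5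
            exact Prod.ext hh1 hh2
          rw [hfm, gmap, dif_neg hA, if_pos hB, dif_pos hC, hcp]
          ext e
          simp only [Finset.mem_union, Finset.mem_erase, Finset.mem_insert,
            Finset.mem_singleton]
          constructor
          · rintro (⟨hn1, hn2, (⟨-, -, heM⟩ | heq | heq)⟩ | rfl | rfl)
            · exact heM
            · exact absurd heq hn2
            · exact absurd heq hn1
            · exact huM
            · exact hvM
          · intro heM
            by_cases he1 : e = s(u, zv k)
            · exact Or.inr (Or.inl he1)
            by_cases he2 : e = s(v, wv k)
            · exact Or.inr (Or.inr he2)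
            refine Or.inl ⟨?_, ?_, Or.inl ⟨he1, he2, heM⟩⟩
            · intro hh; rw [hh] at heM; exact huvM heM
            · intro hh; rw [hh] at heM; exact hzwM heM
        · -- subcase (c2): u = cv k
          have huceq : u = cv k := Fin.ext (by simp only [cv_val]; omega)
          have hCn : ¬∃ p : Fin (2*(k+2)) × Fin (2*(k+2)), p.1 ≠ zv k ∧ p.1.val ≤ k+1 ∧
              k+2 ≤ p.2.val ∧ p.2 ≠ wv k ∧
              s(p.1, p.2) ∈ ((M.erase s(v, wv k)).erase s(u, zv k)) ∪
                {s(zv k, wv k), s(u, v)} := by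
            rintro ⟨⟨u', v'⟩, h1, h2, h3, h4, h5⟩
            dsimp only at h1 h2 h3 h4 h5
            rcases Finset.mem_union.1 h5 with h5 | h5
            · obtain ⟨heM, -, -, -, -⟩ := hEfact _ h5
              have hs := (hshape _ _ heM).2
              have h0 : u'.val ≠ 0 := fun hh => h1 (Fin.ext hh)
              omega
            · rcases Finset.mem_insert.1 h5 with heq | heq
              · rcases Sym2.eq_iff.1 heq with ⟨hh1, -⟩ | ⟨hh1, -⟩
                · exact h1 hh1
                · rw [hh1] at h2; simp only [wv_val] at h2; omega
              · rcases Sym2.eq_iff.1 (Finset.mem_singleton.1 heq) with ⟨hh1, -⟩ | ⟨hh1, -⟩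
                · rw [hh1] at h2; omega
                · rw [hh1] at h2; omega
          have hD : ∃ v', v' ≠ cv k ∧ s(cv k, v') ∈
              ((M.erase s(v, wv k)).erase s(u, zv k)) ∪ {s(zv k, wv k), s(u, v)} := by
            refine ⟨v, fun hh => huv (huceq.trans hh.symm), ?_⟩
            rw [← huceq]
            exact Finset.mem_union_right _ (Finset.mem_insert_of_mem (Finset.mem_singleton_self _))
          have huniqD : ∀ v', v' ≠ cv k → s(cv k, v') ∈
              ((M.erase s(v, wv k)).erase s(u, zv k)) ∪ {s(zv k, wv k), s(u, v)} →
              v' = v := by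
            intro v' h1 h5
            rcases Finset.mem_union.1 h5 with h5 | h5
            · exact ((hEfact _ h5).2.2.2.1
                (by rw [huceq]; exact Sym2.mem_iff.2 (Or.inl rfl))).elim
            · rcases Finset.mem_insert.1 h5 with heq | heq
              · rcases Sym2.eq_iff.1 heq with ⟨hh1, -⟩ | ⟨hh1, -⟩
                · exact (hzc hh1.symm).elim
                · exact (hcw hh1).elim
              · rcases Sym2.eq_iff.1 (Finset.mem_singleton.1 heq) with ⟨-, hh2⟩ | ⟨hh1, hh2⟩
                · exact hh2
                · exact (h1 (hh2.trans huceq)).elim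
          have hDX := huniqD _ hD.choose_spec.1 hD.choose_spec.2
          rw [hfm, gmap, dif_neg hA, if_pos hB, dif_neg hCn, dif_pos hD, hDX, ← huceq,
            show s(zv k, u) = s(u, zv k) from Sym2.eq_swap]
          ext e
          simp only [Finset.mem_union, Finset.mem_erase, Finset.mem_insert,
            Finset.mem_singleton]
          constructor
          · rintro (⟨hn1, hn2, (⟨-, -, heM⟩ | heq | heq)⟩ | rfl | rfl)
            · exact heM
            · exact absurd heq hn2
            · exact absurd heq hn1
            · exact huM
            · exact hvM
          · intro heM
            by_cases he1 : e = s(u, zv k)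
            · exact Or.inr (Or.inl he1)
            by_cases he2 : e = s(v, wv k)
            · exact Or.inr (Or.inr he2)
            refine Or.inl ⟨?_, ?_, Or.inl ⟨he1, he2, heM⟩⟩
            · intro hh; rw [hh] at heM; exact huvM heM
            · intro hh; rw [hh] at heM; exact hzwM heM
    · have hzfree : ∀ e ∈ M, zv k ∉ e := by
        intro e he hze
        obtain ⟨y, hy1, hy2⟩ := partner_exists hsub he hze
        exact hz ⟨y, hy1, hy2⟩
      have hzwM : s(zv k, wv k) ∉ M := fun hmem =>
        hzfree _ hmem (Sym2.mem_iff.2 (Or.inl rfl))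
      by_cases hvc : v = cv k
      · -- case (b2)
        have hfm : fmap k M = (M.erase s(v, wv k)) ∪ {s(zv k, wv k)} := by
          rw [fmap, dif_pos hw, dif_neg hz, if_pos hvc]
        constructor
        · rw [hfm]
          refine ⟨?_, ?_, ?_⟩
          · intro e he
            simp only [Finset.coe_union, Set.mem_union, Finset.mem_coe,
              Finset.coe_singleton, Set.mem_singleton_iff] at he
            rcases he with he | rfl
            · obtain ⟨hne, heM⟩ := Finset.mem_erase.1 he
              exact g2_edge_of (hsub (Finset.mem_coe.2 heM)) (hnw e heM hne)
            · exact g2_edge_zw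
          · have hdisj2 : Disjoint (M.erase s(v, wv k)) ({s(zv k, wv k)} : Finset _) := by
              simp only [Finset.disjoint_singleton_right, Finset.mem_erase, not_and]
              intro _; exact hzwM
            rw [Finset.card_union_of_disjoint hdisj2, Finset.card_erase_of_mem hvM,
              Finset.card_singleton, hcard]
            have : 1 ≤ t := by rw [← hcard]; exact Finset.card_pos.2 ⟨_, hvM⟩
            omega
          · intro e he f hf hef x hx
            obtain ⟨hxe, hxf⟩ := hx
            simp only [Finset.coe_union, Set.mem_union, Finset.mem_coe,
              Finset.coe_singleton, Set.mem_singleton_iff, Finset.mem_erase] at he hf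
            rcases he with ⟨hne, heM⟩ | rfl <;> rcases hf with ⟨hnf, hfM⟩ | rfl
            · exact hdisj heM hfM hef x hxe hxf
            · rcases Sym2.mem_iff.1 hxf with rfl | rfl
              · exact hzfree e heM hxe
              · exact hnw e heM hne hxe
            · rcases Sym2.mem_iff.1 hxe with rfl | rfl
              · exact hzfree f hfM hxf
              · exact hnw f hfM hnf hxf
            · exact hef rfl
        · have hA : ¬∃ v', k+2 < v'.val ∧ v' ≠ wv k ∧
              s(zv k, v') ∈ (M.erase s(v, wv k)) ∪ {s(zv k, wv k)} := by
            rintro ⟨v', hv1, hv2, hv3⟩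
            simp only [Finset.mem_union, Finset.mem_erase, Finset.mem_singleton] at hv3
            rcases hv3 with ⟨-, hv3⟩ | heq
            · exact hzfree _ hv3 (Sym2.mem_iff.2 (Or.inl rfl))
            · rcases Sym2.eq_iff.1 heq with ⟨-, h2⟩ | ⟨h1, -⟩
              · exact hv2 h2
              · exact hzw h1
          have hB : s(zv k, wv k) ∈ (M.erase s(v, wv k)) ∪ {s(zv k, wv k)} :=
            Finset.mem_union_right _ (Finset.mem_singleton_self _)
          have hC : ¬∃ p : Fin (2*(k+2)) × Fin (2*(k+2)), p.1 ≠ zv k ∧ p.1.val ≤ k+1 ∧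
              k+2 ≤ p.2.val ∧ p.2 ≠ wv k ∧
              s(p.1, p.2) ∈ (M.erase s(v, wv k)) ∪ {s(zv k, wv k)} := by
            rintro ⟨⟨u', v'⟩, hu1, hu2, hv1, hv2, hmem⟩
            dsimp only at hu1 hu2 hv1 hv2 hmem
            simp only [Finset.mem_union, Finset.mem_erase, Finset.mem_singleton] at hmem
            rcases hmem with ⟨-, hmem⟩ | heq
            · have hs := (hshape _ _ hmem).2
              have hu0 : u'.val ≠ 0 := fun hh => hu1 (Fin.ext hh)
              omega
            · rcases Sym2.eq_iff.1 heq with ⟨h1, -⟩ | ⟨h1, -⟩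
              · exact hu1 h1
              · rw [h1] at hu2; simp only [wv_val] at hu2; omega
          have hD : ¬∃ v', v' ≠ cv k ∧
              s(cv k, v') ∈ (M.erase s(v, wv k)) ∪ {s(zv k, wv k)} := by
            rintro ⟨v', hv1, hmem⟩
            simp only [Finset.mem_union, Finset.mem_erase, Finset.mem_singleton] at hmem
            rcases hmem with ⟨hne, hmem⟩ | heq
            · exact hdisj hmem hvM hne (cv k) (Sym2.mem_iff.2 (Or.inl rfl))
                (Sym2.mem_iff.2 (Or.inl hvc.symm))
            · rcases Sym2.eq_iff.1 heq with ⟨h1, -⟩ | ⟨h1, -⟩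
              · exact hzc h1.symm
              · exact hcw h1
          rw [hfm, gmap, dif_neg hA, if_pos hB, dif_neg hC, dif_neg hD, ← hvc]
          ext e
          simp only [Finset.mem_union, Finset.mem_erase, Finset.mem_singleton]
          constructor
          · rintro (⟨hne, (⟨-, heM⟩ | heq)⟩ | rfl)
            · exact heM
            · exact absurd heq hne
            · exact hvM
          · intro heM
            by_cases hev : e = s(v, wv k)
            · exact Or.inr hev
            · refine Or.inl ⟨?_, Or.inl ⟨hev, heM⟩⟩
              intro hh; rw [hh] at heM; exact hzwM heM
      · -- case (b1)
        have hvgt : k+2 < v.val := by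
          have : v.val ≠ k+2 := fun hh => hvc (Fin.ext hh)
          omega
        have hfm : fmap k M = (M.erase s(v, wv k)) ∪ {s(zv k, v)} := by
          rw [fmap, dif_pos hw, dif_neg hz, if_neg hvc]
        have hzvM : s(zv k, v) ∉ M := fun hmem =>
          hzfree _ hmem (Sym2.mem_iff.2 (Or.inl rfl))
        constructor
        · rw [hfm]
          refine ⟨?_, ?_, ?_⟩
          · intro e he
            simp only [Finset.coe_union, Set.mem_union, Finset.mem_coe,
              Finset.coe_singleton, Set.mem_singleton_iff] at he
            rcases he with he | rfl
            · obtain ⟨hne, heM⟩ := Finset.mem_erase.1 he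
              exact g2_edge_of (hsub (Finset.mem_coe.2 heM)) (hnw e heM hne)
            · exact g2_edge_of_le (Ne.symm hvz) (by simp) (by omega)
          · have hdisj2 : Disjoint (M.erase s(v, wv k)) ({s(zv k, v)} : Finset _) := by
              simp only [Finset.disjoint_singleton_right, Finset.mem_erase, not_and]
              intro _; exact hzvM
            rw [Finset.card_union_of_disjoint hdisj2, Finset.card_erase_of_mem hvM,
              Finset.card_singleton, hcard]
            have : 1 ≤ t := by rw [← hcard]; exact Finset.card_pos.2 ⟨_, hvM⟩
            omega
          · intro e he f hf hef x hx
            obtain ⟨hxe, hxf⟩ := hx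
            simp only [Finset.coe_union, Set.mem_union, Finset.mem_coe,
              Finset.coe_singleton, Set.mem_singleton_iff, Finset.mem_erase] at he hf
            rcases he with ⟨hne, heM⟩ | rfl <;> rcases hf with ⟨hnf, hfM⟩ | rfl
            · exact hdisj heM hfM hef x hxe hxf
            · rcases Sym2.mem_iff.1 hxf with rfl | rfl
              · exact hzfree e heM hxe
              · exact hnv e heM hne hxe
            · rcases Sym2.mem_iff.1 hxe with rfl | rfl
              · exact hzfree f hfM hxf
              · exact hnv f hfM hnf hxf
            · exact hef rfl
        · have hA : ∃ v', k+2 < v'.val ∧ v' ≠ wv k ∧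
              s(zv k, v') ∈ (M.erase s(v, wv k)) ∪ {s(zv k, v)} :=
            ⟨v, hvgt, hvw, Finset.mem_union_right _ (Finset.mem_singleton_self _)⟩
          have huniq : hA.choose = v := by
            obtain ⟨h1, h2, h3⟩ := hA.choose_spec
            rcases Finset.mem_union.1 h3 with h3 | h3
            · exact (hzfree _ (Finset.mem_erase.1 h3).2 (Sym2.mem_iff.2 (Or.inl rfl))).elim
            · rcases Sym2.eq_iff.1 (Finset.mem_singleton.1 h3) with ⟨-, hh⟩ | ⟨hh, -⟩
              · exact hh
              · exact (hvz hh.symm).elim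
          rw [hfm, gmap, dif_pos hA, huniq]
          ext e
          simp only [Finset.mem_union, Finset.mem_erase, Finset.mem_singleton]
          constructor
          · rintro (⟨hne, (⟨-, heM⟩ | heq)⟩ | rfl)
            · exact heM
            · exact absurd heq hne
            · exact hvM
          · intro heM
            by_cases hev : e = s(v, wv k)
            · exact Or.inr hev
            · refine Or.inl ⟨?_, Or.inl ⟨hev, heM⟩⟩
              intro hh; rw [hh] at heM; exact hzvM heM
  · -- case (a): w unmatched
    have hfm : fmap k M = M := by rw [fmap, dif_neg hw]
    have hwfree : ∀ e ∈ M, wv k ∉ e := by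
      intro e he hwe
      obtain ⟨y, hy1, hy2⟩ := partner_exists hsub he hwe
      exact hw ⟨y, hy1, hy2⟩
    constructor
    · rw [hfm]
      refine ⟨?_, hcard, hpair⟩
      intro e he
      exact g2_edge_of (hsub he) (hwfree e (Finset.mem_coe.1 he))
    · have hA : ¬∃ v', k+2 < v'.val ∧ v' ≠ wv k ∧ s(zv k, v') ∈ M := by
        rintro ⟨v', hv1, hv2, hv3⟩
        have hs := (hshape _ _ hv3).2
        simp only [zv_val] at hs
        omega
      have hB : s(zv k, wv k) ∉ M := fun hmem =>
        hwfree _ hmem (Sym2.mem_iff.2 (Or.inr rfl))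
      rw [hfm, gmap, dif_neg hA, if_neg hB]

lemma key (k t : ℕ) : matchCount (Kmk (2*(k+2)) (k+2) 1) t ≤ matchCount (Kstar (2*(k+2)) 1) t := by
  rw [show Kmk (2*(k+2)) (k+2) 1 = G1 k from rfl, show Kstar (2*(k+2)) 1 = G2 k from rfl,
    matchCount_eq, matchCount_eq]
  refine Nat.card_le_card_of_injective
    (fun s : {s // Good (G1 k) t s} => (⟨fmap k s.1, (fmap_spec s.2).1⟩ : {s // Good (G2 k) t s})) ?_
  intro a b hab
  have h1 : fmap k a.1 = fmap k b.1 := congrArg Subtype.val hab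
  have h2 : a.1 = b.1 := by
    rw [← (fmap_spec a.2).2, ← (fmap_spec b.2).2, h1]
  exact Subtype.ext h2

end Stmt12Aux


/-- For every positive integer `m` and `t ≤ m`: `m(K^1_{m,m},t) ≤ m(K^1_{2m-1,1},t)`. -/
theorem stmt12 (m : ℕ) (hm : 1 ≤ m) :
    ∀ t : ℕ, t ≤ m → matchCount (Kmk (2 * m) m 1) t ≤ matchCount (Kstar (2 * m) 1) t := by
  intro t ht
  rcases Nat.lt_or_ge m 2 with h2 | h2
  · have hm1 : m = 1 := by omega
    subst hm1
    have hg : Kmk (2*1) 1 1 = Kstar (2*1) 1 := by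
      ext a b
      simp only [Kmk, Kstar, SimpleGraph.fromRel_adj]
      constructor
      · rintro ⟨h, hh⟩
        have h' : a.val ≠ b.val := fun x => h (Fin.ext x)
        have := a.isLt; have := b.isLt
        exact ⟨h, by omega⟩
      · rintro ⟨h, hh⟩
        have h' : a.val ≠ b.val := fun x => h (Fin.ext x)
        have := a.isLt; have := b.isLt
        exact ⟨h, by omega⟩
    rw [hg]
  · obtain ⟨k, rfl⟩ : ∃ k, m = k + 2 := ⟨m - 2, by omega⟩
    exact Stmt12Aux.key k t
end

section
/- For every positive integer m and every t = 0, 1, …, m: m(K^1_{m+1,m}, t) ≤ m(K^1_{2m,1}, t). -/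
namespace Stmt13

open SimpleGraph Finset Equiv

variable {m : ℕ}

def A0 (m : ℕ) : Fin (2*m+1) := ⟨0, by omega⟩
def A1 (m : ℕ) : Fin (2*m+1) := ⟨min (m+1) (2*m), by omega⟩
def A2 (m : ℕ) : Fin (2*m+1) := ⟨2*m, Nat.lt_succ_self _⟩

@[simp] lemma A0_val : (A0 m).val = 0 := rfl
lemma A1_val (hm : 1 ≤ m) : (A1 m).val = m+1 := by simp [A1]; omega
@[simp] lemma A2_val : (A2 m).val = 2*m := rfl

lemma kmk_adj {u v : Fin (2*m+1)} :
    (Kmk (2*m+1) m 1).Adj u v ↔ u.val ≠ v.val ∧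
      ((u.val ≤ m ∧ v.val ≤ m) ∨ (m+1 ≤ u.val ∧ m+1 ≤ v.val) ∨
       (u.val = 0 ∧ v.val = m+1) ∨ (v.val = 0 ∧ u.val = m+1)) := by
  rw [Kmk, SimpleGraph.fromRel_adj]
  simp only [ne_eq, Fin.ext_iff]
  omega

lemma kstar_adj {u v : Fin (2*m+1)} :
    (Kstar (2*m+1) 1).Adj u v ↔ u.val ≠ v.val ∧
      ((u.val < 2*m ∧ v.val < 2*m) ∨ (u.val = 0 ∧ v.val = 2*m) ∨
       (v.val = 0 ∧ u.val = 2*m)) := by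
  rw [Kstar, SimpleGraph.fromRel_adj]
  simp only [ne_eq, Fin.ext_iff]
  omega

/-- `v` is covered by the edge set `s`. -/
def covered (s : Finset (Sym2 (Fin (2*m+1)))) (v : Fin (2*m+1)) : Prop :=
  ∃ u, s(v, u) ∈ s

lemma covered_of_mem {s : Finset (Sym2 (Fin (2*m+1)))} {v u w : Fin (2*m+1)}
    (h : s(u, w) ∈ s) (hv : v = u ∨ v = w) : covered s v := by
  rcases hv with rfl | rfl
  · exact ⟨w, h⟩
  · exact ⟨u, by rwa [Sym2.eq_swap]⟩

open Classical in
noncomputable def partner (s : Finset (Sym2 (Fin (2*m+1)))) (v : Fin (2*m+1)) : Fin (2*m+1) :=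
  if h : covered s v then h.choose else v

lemma partner_mem {s : Finset (Sym2 (Fin (2*m+1)))} {v : Fin (2*m+1)}
    (h : covered s v) : s(v, partner s v) ∈ s := by
  rw [partner, dif_pos h]
  exact h.choose_spec

/-- The swap applied on `Sym2`. -/
def msw (p q : Fin (2*m+1)) : Sym2 (Fin (2*m+1)) → Sym2 (Fin (2*m+1)) :=
  Sym2.map (Equiv.swap p q)

lemma msw_invol (p q : Fin (2*m+1)) (e : Sym2 (Fin (2*m+1))) : msw p q (msw p q e) = e := by
  rw [msw, Sym2.map_map]
  have : (⇑(Equiv.swap p q) ∘ ⇑(Equiv.swap p q)) = id := by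
    funext x; exact Equiv.swap_apply_self p q x
  rw [this, Sym2.map_id, id_eq]

lemma msw_pair (p q u v : Fin (2*m+1)) :
    msw p q s(u, v) = s(Equiv.swap p q u, Equiv.swap p q v) := Sym2.map_pair_eq _ _ _

lemma msw_inj (p q : Fin (2*m+1)) : Function.Injective (msw p q) :=
  Sym2.map.injective (Equiv.injective _)

lemma mem_image_msw {s : Finset (Sym2 (Fin (2*m+1)))} {p q : Fin (2*m+1)}
    {e : Sym2 (Fin (2*m+1))} : e ∈ s.image (msw p q) ↔ msw p q e ∈ s := by
  constructor
  · rintro h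
    obtain ⟨a, ha, rfl⟩ := Finset.mem_image.mp h
    rwa [msw_invol]
  · intro h
    exact Finset.mem_image.mpr ⟨msw p q e, h, msw_invol p q e⟩

open Classical in
noncomputable def pick1 (m : ℕ) (s : Finset (Sym2 (Fin (2*m+1)))) :
    Fin (2*m+1) × Fin (2*m+1) :=
  if covered s (A2 m) then
    (if covered s (A0 m) then (partner s (A0 m), A2 m)
     else if s(A1 m, A2 m) ∈ s then (A0 m, A1 m) else (A0 m, A2 m))
  else (A2 m, A2 m)

noncomputable def phi (m : ℕ) (s : Finset (Sym2 (Fin (2*m+1)))) :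
    Finset (Sym2 (Fin (2*m+1))) :=
  s.image (msw (pick1 m s).1 (pick1 m s).2)

open Classical in
noncomputable def pick2 (m : ℕ) (N : Finset (Sym2 (Fin (2*m+1)))) :
    Fin (2*m+1) × Fin (2*m+1) :=
  if covered N (A2 m) then
    (if h : ∃ p : Fin (2*m+1) × Fin (2*m+1),
        1 ≤ p.1.val ∧ p.1.val ≤ m ∧ m+1 ≤ p.2.val ∧ p.2.val ≤ 2*m-1 ∧ s(p.1, p.2) ∈ N
     then (h.choose.1, A2 m)
     else if covered N (A1 m) then (A1 m, A2 m) else (A0 m, A1 m))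
  else
    (if ∃ z : Fin (2*m+1), m+2 ≤ z.val ∧ z.val ≤ 2*m-1 ∧ s(A0 m, z) ∈ N
     then (A0 m, A2 m) else (A2 m, A2 m))

noncomputable def psi (m : ℕ) (N : Finset (Sym2 (Fin (2*m+1)))) :
    Finset (Sym2 (Fin (2*m+1))) :=
  N.image (msw (pick2 m N).1 (pick2 m N).2)

theorem phi_good (hm : 2 ≤ m) (s : Finset (Sym2 (Fin (2*m+1))))
    (hsub : ↑s ⊆ (Kmk (2*m+1) m 1).edgeSet)
    (hpw : (↑s : Set (Sym2 (Fin (2*m+1)))).Pairwise fun e f => ∀ v, ¬(v ∈ e ∧ v ∈ f)) :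
    ↑(phi m s) ⊆ (Kstar (2*m+1) 1).edgeSet ∧ pick2 m (phi m s) = pick1 m s := by
  have hA1 : (A1 m).val = m + 1 := A1_val (by omega)
  have hfne : ∀ {a b : Fin (2*m+1)}, a.val ≠ b.val → a ≠ b :=
    fun h h' => h (congrArg Fin.val h')
  have hval : ∀ {a b : Fin (2*m+1)}, a ≠ b → a.val ≠ b.val :=
    fun h h' => h (Fin.ext h')
  have hadj : ∀ {u v : Fin (2*m+1)}, s(u,v) ∈ s → u.val ≠ v.val ∧
      ((u.val ≤ m ∧ v.val ≤ m) ∨ (m+1 ≤ u.val ∧ m+1 ≤ v.val) ∨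
       (u.val = 0 ∧ v.val = m+1) ∨ (v.val = 0 ∧ u.val = m+1)) :=
    fun h => kmk_adj.mp ((SimpleGraph.mem_edgeSet _).mp (hsub h))
  have huniq : ∀ {e f : Sym2 (Fin (2*m+1))} {v}, e ∈ s → f ∈ s → v ∈ e → v ∈ f → e = f := by
    intro e f v he hf hv hv'
    by_contra hne
    exact hpw (Finset.mem_coe.mpr he) (Finset.mem_coe.mpr hf) hne v ⟨hv, hv'⟩
  by_cases h2 : covered s (A2 m)
  · have hxmem : s(A2 m, partner s (A2 m)) ∈ s := partner_mem h2
    set x := partner s (A2 m) with hxdef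
    have hxv : m+1 ≤ x.val ∧ x.val ≤ 2*m-1 := by
      have h := hadj hxmem
      have := x.isLt
      simp only [A2_val] at h
      omega
    have hxa2 : x ≠ A2 m := hfne (by simp only [A2_val]; omega)
    have hxa0 : x ≠ A0 m := hfne (by simp only [A0_val]; omega)
    by_cases h0 : covered s (A0 m)
    · -- Case 2C : both A2 and A0 covered; swap (partner A0) A2
      have hcmem : s(A0 m, partner s (A0 m)) ∈ s := partner_mem h0
      set c := partner s (A0 m) with hcdef
      have hp1 : pick1 m s = (c, A2 m) := by
        simp only [pick1]; rw [if_pos h2, if_pos h0]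
      have hp1a : (pick1 m s).1 = c := by rw [hp1]
      have hp1b : (pick1 m s).2 = A2 m := by rw [hp1]
      have hphi : phi m s = s.image (msw c (A2 m)) := by rw [phi, hp1a, hp1b]
      have hcv : (1 ≤ c.val ∧ c.val ≤ m) ∨ c.val = m+1 := by
        have h := hadj hcmem
        have := c.isLt
        simp only [A0_val] at h
        omega
      have hcx : c ≠ x := by
        intro h
        have heq := huniq hcmem hxmem (h ▸ Sym2.mem_mk_right (A0 m) c)
          (Sym2.mem_mk_right (A2 m) x)
        rw [Sym2.eq_iff] at heq
        rcases heq with ⟨h1, _⟩ | ⟨h1, _⟩ <;>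
          exact absurd (congrArg Fin.val h1) (by simp only [A0_val, A2_val]; omega)
      have hca2 : c ≠ A2 m := hfne (by simp only [A2_val]; omega)
      have hca0 : c ≠ A0 m := hfne (by simp only [A0_val]; omega)
      have ha0a2 : A0 m ≠ A2 m := hfne (by simp only [A0_val, A2_val]; omega)
      have hswc : Equiv.swap c (A2 m) c = A2 m := Equiv.swap_apply_left _ _
      have hswA2 : Equiv.swap c (A2 m) (A2 m) = c := Equiv.swap_apply_right _ _
      have hswA0 : Equiv.swap c (A2 m) (A0 m) = A0 m :=
        Equiv.swap_apply_of_ne_of_ne (Ne.symm hca0) ha0a2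
      have hswx : Equiv.swap c (A2 m) x = x :=
        Equiv.swap_apply_of_ne_of_ne (Ne.symm hcx) hxa2
      have hclass : ∀ {u v : Fin (2*m+1)}, s(u,v) ∈ s →
          s(u,v) = s(A2 m, x) ∨ s(u,v) = s(A0 m, c) ∨
          (u ≠ c ∧ u ≠ A2 m ∧ v ≠ c ∧ v ≠ A2 m ∧ u ≠ A0 m ∧ v ≠ A0 m) := by
        intro u v h
        by_cases h2e : A2 m ∈ s(u,v)
        · exact Or.inl (huniq h hxmem h2e (Sym2.mem_mk_left _ _))
        by_cases h0e : A0 m ∈ s(u,v)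
        · exact Or.inr (Or.inl (huniq h hcmem h0e (Sym2.mem_mk_left _ _)))
        by_cases hce : c ∈ s(u,v)
        · exact Or.inr (Or.inl (huniq h hcmem hce (Sym2.mem_mk_right _ _)))
        · rw [Sym2.mem_iff] at h2e h0e hce
          push_neg at h2e h0e hce
          exact Or.inr (Or.inr ⟨Ne.symm hce.1, Ne.symm h2e.1, Ne.symm hce.2,
            Ne.symm h2e.2, Ne.symm h0e.1, Ne.symm h0e.2⟩)
      constructor
      · intro e he
        rw [Finset.mem_coe, hphi] at he
        obtain ⟨f, hf, rfl⟩ := Finset.mem_image.mp he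
        revert hf
        induction f using Sym2.ind with
        | _ u v =>
          intro hf
          rcases hclass hf with he' | he' | ⟨hn1, hn2, hn3, hn4, hn5, hn6⟩
          · rw [he', msw_pair, hswA2, hswx, SimpleGraph.mem_edgeSet, kstar_adj]
            refine ⟨hval hcx, Or.inl ⟨?_, ?_⟩⟩ <;> omega
          · rw [he', msw_pair, hswA0, hswc, SimpleGraph.mem_edgeSet, kstar_adj]
            exact ⟨by simp only [A0_val, A2_val]; omega,
              Or.inr (Or.inl ⟨rfl, rfl⟩)⟩
          · rw [msw_pair, Equiv.swap_apply_of_ne_of_ne hn1 hn2,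
              Equiv.swap_apply_of_ne_of_ne hn3 hn4, SimpleGraph.mem_edgeSet, kstar_adj]
            obtain ⟨hne', hcase⟩ := hadj hf
            have h2v : u.val ≠ 2*m := hval hn2
            have h4v : v.val ≠ 2*m := hval hn4
            have h5v : u.val ≠ 0 := hval hn5
            have h6v : v.val ≠ 0 := hval hn6
            exact ⟨hne', by omega⟩
      · have hcov2' : covered (phi m s) (A2 m) := by
          refine ⟨A0 m, ?_⟩
          rw [hphi, mem_image_msw, msw_pair, hswA2, hswA0, Sym2.eq_swap]
          exact hcmem
        rw [hp1]
        rcases hcv with hcm | hcm1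
        · -- c in the big clique part
          have hex : ∃ p : Fin (2*m+1) × Fin (2*m+1),
              1 ≤ p.1.val ∧ p.1.val ≤ m ∧ m+1 ≤ p.2.val ∧ p.2.val ≤ 2*m-1 ∧
              s(p.1, p.2) ∈ phi m s := by
            refine ⟨(c, x), hcm.1, hcm.2, hxv.1, hxv.2, ?_⟩
            rw [hphi, mem_image_msw, msw_pair, hswc, hswx]
            exact hxmem
          have huc : ∀ p : Fin (2*m+1) × Fin (2*m+1), 1 ≤ p.1.val → p.1.val ≤ m →
              m+1 ≤ p.2.val → p.2.val ≤ 2*m-1 → s(p.1, p.2) ∈ phi m s → p.1 = c := by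
            intro p hs1 hs2 hs3 hs4 hs5
            rw [hphi, mem_image_msw, msw_pair] at hs5
            have hp2f : Equiv.swap c (A2 m) p.2 = p.2 :=
              Equiv.swap_apply_of_ne_of_ne (hfne (by omega))
                (hfne (by simp only [A2_val]; omega))
            rw [hp2f] at hs5
            by_contra hne
            rw [Equiv.swap_apply_of_ne_of_ne hne
              (hfne (by simp only [A2_val]; omega))] at hs5
            have := hadj hs5
            omega
          rw [pick2, if_pos hcov2', dif_pos hex]
          obtain ⟨hs1, hs2, hs3, hs4, hs5⟩ := hex.choose_spec
          exact congrArg (fun z => (z, A2 m)) (huc _ hs1 hs2 hs3 hs4 hs5)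
        · -- c = A1 (the bridge edge is in s)
          have hc1 : c = A1 m := Fin.ext (by rw [hA1]; omega)
          have hnex : ¬ ∃ p : Fin (2*m+1) × Fin (2*m+1),
              1 ≤ p.1.val ∧ p.1.val ≤ m ∧ m+1 ≤ p.2.val ∧ p.2.val ≤ 2*m-1 ∧
              s(p.1, p.2) ∈ phi m s := by
            rintro ⟨p, hs1, hs2, hs3, hs4, hs5⟩
            rw [hphi, mem_image_msw, msw_pair] at hs5
            rw [Equiv.swap_apply_of_ne_of_ne (hfne (by omega))
              (hfne (by simp only [A2_val]; omega))] at hs5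
            by_cases hp2 : p.2 = c
            · rw [hp2, hswc] at hs5
              have := hadj hs5
              simp only [A2_val] at this
              omega
            · rw [Equiv.swap_apply_of_ne_of_ne hp2
                (hfne (by simp only [A2_val]; omega))] at hs5
              have := hadj hs5
              omega
          have hcovA1 : covered (phi m s) (A1 m) := by
            refine ⟨x, ?_⟩
            rw [hphi, mem_image_msw, msw_pair, ← hc1, hswc, hswx]
            exact hxmem
          rw [pick2, if_pos hcov2', dif_neg hnex, if_pos hcovA1, hc1]
    · -- A0 not covered
      have hxv2 : x.val ≤ 2*m-1 := hxv.2
      by_cases hsp : s(A1 m, A2 m) ∈ s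
      · -- Case 2A : bridge-to-top edge present, swap A0 A1
        have hp1 : pick1 m s = (A0 m, A1 m) := by
          simp only [pick1]; rw [if_pos h2, if_neg h0, if_pos hsp]
        have hp1a : (pick1 m s).1 = A0 m := by rw [hp1]
        have hp1b : (pick1 m s).2 = A1 m := by rw [hp1]
        have hphi : phi m s = s.image (msw (A0 m) (A1 m)) := by rw [phi, hp1a, hp1b]
        have ha01 : A0 m ≠ A1 m := hfne (by rw [A0_val, hA1]; omega)
        have ha12 : A1 m ≠ A2 m := hfne (by rw [hA1, A2_val]; omega)
        have ha02 : A0 m ≠ A2 m := hfne (by rw [A0_val, A2_val]; omega)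
        have hswA1 : Equiv.swap (A0 m) (A1 m) (A1 m) = A0 m := Equiv.swap_apply_right _ _
        have hswA0 : Equiv.swap (A0 m) (A1 m) (A0 m) = A1 m := Equiv.swap_apply_left _ _
        have hswA2 : Equiv.swap (A0 m) (A1 m) (A2 m) = A2 m :=
          Equiv.swap_apply_of_ne_of_ne (Ne.symm ha02) (Ne.symm ha12)
        have hclass : ∀ {u v : Fin (2*m+1)}, s(u,v) ∈ s →
            s(u,v) = s(A1 m, A2 m) ∨
            (u ≠ A0 m ∧ u ≠ A1 m ∧ u ≠ A2 m ∧ v ≠ A0 m ∧ v ≠ A1 m ∧ v ≠ A2 m) := by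
          intro u v h
          by_cases h1e : A1 m ∈ s(u,v)
          · exact Or.inl (huniq h hsp h1e (Sym2.mem_mk_left _ _))
          by_cases h2e : A2 m ∈ s(u,v)
          · exact Or.inl (huniq h hsp h2e (Sym2.mem_mk_right _ _))
          by_cases h0e : A0 m ∈ s(u,v)
          · exact absurd (covered_of_mem h (Sym2.mem_iff.mp h0e)) h0
          · rw [Sym2.mem_iff] at h1e h2e h0e
            push_neg at h1e h2e h0e
            exact Or.inr ⟨Ne.symm h0e.1, Ne.symm h1e.1, Ne.symm h2e.1,
              Ne.symm h0e.2, Ne.symm h1e.2, Ne.symm h2e.2⟩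
        constructor
        · intro e he
          rw [Finset.mem_coe, hphi] at he
          obtain ⟨f, hf, rfl⟩ := Finset.mem_image.mp he
          revert hf
          induction f using Sym2.ind with
          | _ u v =>
            intro hf
            rcases hclass hf with he' | ⟨hn1, hn2, hn3, hn4, hn5, hn6⟩
            · rw [he', msw_pair, hswA1, hswA2, SimpleGraph.mem_edgeSet, kstar_adj]
              exact ⟨by simp only [A0_val, A2_val]; omega, Or.inr (Or.inl ⟨rfl, rfl⟩)⟩
            · rw [msw_pair, Equiv.swap_apply_of_ne_of_ne hn1 hn2,
                Equiv.swap_apply_of_ne_of_ne hn4 hn5, SimpleGraph.mem_edgeSet, kstar_adj]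
              obtain ⟨hne', hcase⟩ := hadj hf
              have h3v : u.val ≠ 2*m := hval hn3
              have h6v : v.val ≠ 2*m := hval hn6
              have h1v : u.val ≠ 0 := hval hn1
              have h4v : v.val ≠ 0 := hval hn4
              exact ⟨hne', by omega⟩
        · have hcov2' : covered (phi m s) (A2 m) := by
            refine ⟨A0 m, ?_⟩
            rw [hphi, mem_image_msw, msw_pair, hswA2, hswA0, Sym2.eq_swap]
            exact hsp
          have hnex : ¬ ∃ p : Fin (2*m+1) × Fin (2*m+1),
              1 ≤ p.1.val ∧ p.1.val ≤ m ∧ m+1 ≤ p.2.val ∧ p.2.val ≤ 2*m-1 ∧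
              s(p.1, p.2) ∈ phi m s := by
            rintro ⟨p, hs1, hs2, hs3, hs4, hs5⟩
            rw [hphi, mem_image_msw, msw_pair] at hs5
            rw [Equiv.swap_apply_of_ne_of_ne (hfne (by rw [A0_val]; omega))
              (hfne (by rw [hA1]; omega))] at hs5
            by_cases hp2 : p.2 = A1 m
            · rw [hp2, hswA1] at hs5
              exact h0 (covered_of_mem hs5 (Or.inr rfl))
            · rw [Equiv.swap_apply_of_ne_of_ne (hfne (by rw [A0_val]; omega)) hp2] at hs5
              have := hadj hs5
              omega
          have hncovA1 : ¬ covered (phi m s) (A1 m) := by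
            rintro ⟨z, hz⟩
            rw [hphi, mem_image_msw, msw_pair, hswA1] at hz
            exact h0 (covered_of_mem hz (Or.inl rfl))
          rw [pick2, if_pos hcov2', dif_neg hnex, if_neg hncovA1, hp1]
      · -- Case 2B : swap A0 A2
        have hp1 : pick1 m s = (A0 m, A2 m) := by
          simp only [pick1]; rw [if_pos h2, if_neg h0, if_neg hsp]
        have hp1a : (pick1 m s).1 = A0 m := by rw [hp1]
        have hp1b : (pick1 m s).2 = A2 m := by rw [hp1]
        have hphi : phi m s = s.image (msw (A0 m) (A2 m)) := by rw [phi, hp1a, hp1b]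
        have hxA1 : x ≠ A1 m := by
          intro h
          exact hsp (by rw [Sym2.eq_swap]; exact h ▸ hxmem)
        have hxv3 : m+2 ≤ x.val := by
          have := hval hxA1
          rw [hA1] at this
          omega
        have ha02 : A0 m ≠ A2 m := hfne (by rw [A0_val, A2_val]; omega)
        have hswA0 : Equiv.swap (A0 m) (A2 m) (A0 m) = A2 m := Equiv.swap_apply_left _ _
        have hswA2 : Equiv.swap (A0 m) (A2 m) (A2 m) = A0 m := Equiv.swap_apply_right _ _
        have hswx : Equiv.swap (A0 m) (A2 m) x = x :=
          Equiv.swap_apply_of_ne_of_ne hxa0 hxa2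
        have hclass : ∀ {u v : Fin (2*m+1)}, s(u,v) ∈ s →
            s(u,v) = s(A2 m, x) ∨
            (u ≠ A0 m ∧ u ≠ A2 m ∧ v ≠ A0 m ∧ v ≠ A2 m) := by
          intro u v h
          by_cases h2e : A2 m ∈ s(u,v)
          · exact Or.inl (huniq h hxmem h2e (Sym2.mem_mk_left _ _))
          by_cases h0e : A0 m ∈ s(u,v)
          · exact absurd (covered_of_mem h (Sym2.mem_iff.mp h0e)) h0
          · rw [Sym2.mem_iff] at h2e h0e
            push_neg at h2e h0e
            exact Or.inr ⟨Ne.symm h0e.1, Ne.symm h2e.1, Ne.symm h0e.2, Ne.symm h2e.2⟩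
        constructor
        · intro e he
          rw [Finset.mem_coe, hphi] at he
          obtain ⟨f, hf, rfl⟩ := Finset.mem_image.mp he
          revert hf
          induction f using Sym2.ind with
          | _ u v =>
            intro hf
            rcases hclass hf with he' | ⟨hn1, hn2, hn3, hn4⟩
            · rw [he', msw_pair, hswA2, hswx, SimpleGraph.mem_edgeSet, kstar_adj]
              exact ⟨by simp only [A0_val]; omega,
                Or.inl ⟨by simp only [A0_val]; omega, by omega⟩⟩
            · rw [msw_pair, Equiv.swap_apply_of_ne_of_ne hn1 hn2,
                Equiv.swap_apply_of_ne_of_ne hn3 hn4, SimpleGraph.mem_edgeSet, kstar_adj]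
              obtain ⟨hne', hcase⟩ := hadj hf
              have h2v : u.val ≠ 2*m := hval hn2
              have h4v : v.val ≠ 2*m := hval hn4
              have h1v : u.val ≠ 0 := hval hn1
              have h3v : v.val ≠ 0 := hval hn3
              exact ⟨hne', by omega⟩
        · have hncov2 : ¬ covered (phi m s) (A2 m) := by
            rintro ⟨z, hz⟩
            rw [hphi, mem_image_msw, msw_pair, hswA2] at hz
            exact h0 (covered_of_mem hz (Or.inl rfl))
          have hex : ∃ z : Fin (2*m+1), m+2 ≤ z.val ∧ z.val ≤ 2*m-1 ∧
              s(A0 m, z) ∈ phi m s := by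
            refine ⟨x, hxv3, hxv2, ?_⟩
            rw [hphi, mem_image_msw, msw_pair, hswA0, hswx]
            exact hxmem
          rw [pick2, if_neg hncov2, if_pos hex, hp1]
  · -- Case 1 : A2 not covered, identity
    have hp1 : pick1 m s = (A2 m, A2 m) := by
      simp only [pick1]; rw [if_neg h2]
    have hp1a : (pick1 m s).1 = A2 m := by rw [hp1]
    have hp1b : (pick1 m s).2 = A2 m := by rw [hp1]
    have hmswid : msw (A2 m) (A2 m) = id := by
      funext e
      rw [msw, Equiv.swap_self]
      simp [Sym2.map_id]
    have hphi : phi m s = s := by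
      rw [phi, hp1a, hp1b, hmswid, Finset.image_id]
    constructor
    · intro e he
      rw [Finset.mem_coe, hphi] at he
      revert he
      induction e using Sym2.ind with
      | _ u v =>
        intro he
        rw [SimpleGraph.mem_edgeSet, kstar_adj]
        obtain ⟨hne', hcase⟩ := hadj he
        have hu2 : u.val ≠ 2*m := by
          intro h
          exact h2 (covered_of_mem he (Or.inl (Fin.ext (by rw [A2_val, h]))))
        have hv2 : v.val ≠ 2*m := by
          intro h
          exact h2 (covered_of_mem he (Or.inr (Fin.ext (by rw [A2_val, h]))))
        exact ⟨hne', by omega⟩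
    · have hncov2 : ¬ covered (phi m s) (A2 m) := by rw [hphi]; exact h2
      have hnex : ¬ ∃ z : Fin (2*m+1), m+2 ≤ z.val ∧ z.val ≤ 2*m-1 ∧
          s(A0 m, z) ∈ phi m s := by
        rintro ⟨z, hz1, hz2, hz3⟩
        rw [hphi] at hz3
        have := hadj hz3
        simp only [A0_val] at this
        omega
      rw [pick2, if_neg hncov2, if_neg hnex, hp1]



lemma image_image_msw (p q : Fin (2*m+1)) (s : Finset (Sym2 (Fin (2*m+1)))) :
    (s.image (msw p q)).image (msw p q) = s := by
  ext e
  rw [mem_image_msw, mem_image_msw, msw_invol]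

lemma psi_phi (hm : 2 ≤ m) (s : Finset (Sym2 (Fin (2*m+1))))
    (hsub : ↑s ⊆ (Kmk (2*m+1) m 1).edgeSet)
    (hpw : (↑s : Set (Sym2 (Fin (2*m+1)))).Pairwise fun e f => ∀ v, ¬(v ∈ e ∧ v ∈ f)) :
    psi m (phi m s) = s := by
  have h := (phi_good hm s hsub hpw).2
  rw [psi, h, phi, image_image_msw]

lemma pw_image (p q : Fin (2*m+1)) (s : Finset (Sym2 (Fin (2*m+1))))
    (hpw : (↑s : Set (Sym2 (Fin (2*m+1)))).Pairwise fun e f => ∀ v, ¬(v ∈ e ∧ v ∈ f)) :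
    (↑(s.image (msw p q)) : Set (Sym2 (Fin (2*m+1)))).Pairwise
      fun e f => ∀ v, ¬(v ∈ e ∧ v ∈ f) := by
  intro e he f hf hne v hv
  rw [Finset.mem_coe] at he hf
  obtain ⟨e', he', rfl⟩ := Finset.mem_image.mp he
  obtain ⟨f', hf', rfl⟩ := Finset.mem_image.mp hf
  have hne' : e' ≠ f' := fun h => hne (by rw [h])
  obtain ⟨hv1, hv2⟩ := hv
  obtain ⟨a, ha, hav⟩ := Sym2.mem_map.mp hv1
  obtain ⟨b, hb, hbv⟩ := Sym2.mem_map.mp hv2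
  have hab : a = b := Equiv.injective _ (hav.trans hbv.symm)
  exact hpw (Finset.mem_coe.mpr he') (Finset.mem_coe.mpr hf') hne' a ⟨ha, hab ▸ hb⟩

theorem main2 (hm : 2 ≤ m) (t : ℕ) :
    matchCount (Kmk (2*m+1) m 1) t ≤ matchCount (Kstar (2*m+1) 1) t := by
  rw [matchCount, matchCount]
  apply Nat.card_le_card_of_injective
    (fun p : {s : Finset (Sym2 (Fin (2*m+1))) // ↑s ⊆ (Kmk (2*m+1) m 1).edgeSet ∧
        s.card = t ∧ (↑s : Set (Sym2 (Fin (2*m+1)))).Pairwise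
          fun e f => ∀ v, ¬(v ∈ e ∧ v ∈ f)} =>
      (⟨phi m p.1, (phi_good hm p.1 p.2.1 p.2.2.2).1,
        by rw [phi, Finset.card_image_of_injective _ (msw_inj _ _)]; exact p.2.2.1,
        by rw [phi]; exact pw_image _ _ _ p.2.2.2⟩ :
      {s : Finset (Sym2 (Fin (2*m+1))) // ↑s ⊆ (Kstar (2*m+1) 1).edgeSet ∧
        s.card = t ∧ (↑s : Set (Sym2 (Fin (2*m+1)))).Pairwise
          fun e f => ∀ v, ¬(v ∈ e ∧ v ∈ f)}))
  intro p q h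
  have h' : phi m p.1 = phi m q.1 := congrArg Subtype.val h
  apply Subtype.ext
  calc p.1 = psi m (phi m p.1) := (psi_phi hm p.1 p.2.1 p.2.2.2).symm
    _ = psi m (phi m q.1) := by rw [h']
    _ = q.1 := psi_phi hm q.1 q.2.1 q.2.2.2

end Stmt13

/-- For every positive integer `m` and `t ≤ m`: `m(K^1_{m+1,m},t) ≤ m(K^1_{2m,1},t)`. -/
theorem stmt13 (m : ℕ) (hm : 1 ≤ m) :
    ∀ t : ℕ, t ≤ m →
      matchCount (Kmk (2 * m + 1) m 1) t ≤ matchCount (Kstar (2 * m + 1) 1) t := by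
  intro t _
  rcases eq_or_lt_of_le hm with h1 | h1
  · have hm1 : m = 1 := h1.symm
    subst hm1
    have hEq : Kmk (2 * 1 + 1) 1 1 = Kstar (2 * 1 + 1) 1 := by
      ext u v
      rw [Stmt13.kmk_adj (m := 1), Stmt13.kstar_adj (m := 1)]
      have := u.isLt
      have := v.isLt
      omega
    rw [hEq]
  · exact Stmt13.main2 h1 t
end

section
/- Suppose 2 ≤ m ≤ ⌊n/2⌋. Then m(K^1_{n-m,m}, t) ≤ m(K^1_{n-1,1}, t) for all t = 0, 1, …, ⌊n/2⌋. -/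
namespace Stmt14Aux

lemma kmk_adj (n m : ℕ) (u v : Fin n) :
    (Kmk n m 1).Adj u v ↔ u ≠ v ∧
      ((u.val < n - m ∧ v.val < n - m) ∨ (n - m ≤ u.val ∧ n - m ≤ v.val) ∨
       (u.val = 0 ∧ v.val = n - m) ∨ (v.val = 0 ∧ u.val = n - m)) := by
  rw [Kmk, SimpleGraph.fromRel_adj]
  constructor <;> rintro ⟨h1, h2⟩ <;> exact ⟨h1, by omega⟩

lemma kstar_adj (n : ℕ) (u v : Fin n) :
    (Kstar n 1).Adj u v ↔ u ≠ v ∧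
      ((u.val < n - 1 ∧ v.val < n - 1) ∨ (u.val = 0 ∧ v.val = n - 1) ∨
       (v.val = 0 ∧ u.val = n - 1)) := by
  rw [Kstar, SimpleGraph.fromRel_adj]
  constructor <;> rintro ⟨h1, h2⟩ <;> exact ⟨h1, by omega⟩

lemma pw_eq {V : Type*} {M : Finset (Sym2 V)}
    (hpw : (M : Set (Sym2 V)).Pairwise fun e f => ∀ v, ¬(v ∈ e ∧ v ∈ f))
    {e f : Sym2 V} (he : e ∈ M) (hf : f ∈ M) {v : V} (hv : v ∈ e) (hv' : v ∈ f) : e = f := by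
  by_contra hne
  exact hpw (by exact_mod_cast he) (by exact_mod_cast hf) hne v ⟨hv, hv'⟩

lemma pw_union2 {V : Type*} [DecidableEq V] {E : Finset (Sym2 V)} {x₁ x₂ : Sym2 V}
    (hE : (E : Set (Sym2 V)).Pairwise fun e f => ∀ v, ¬(v ∈ e ∧ v ∈ f))
    (h1 : ∀ e ∈ E, ∀ v, ¬(v ∈ e ∧ v ∈ x₁))
    (h2 : ∀ e ∈ E, ∀ v, ¬(v ∈ e ∧ v ∈ x₂))
    (h12 : ∀ v, ¬(v ∈ x₁ ∧ v ∈ x₂)) :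
    (((E ∪ {x₁, x₂} : Finset (Sym2 V)) : Set (Sym2 V)).Pairwise
      fun e f => ∀ v, ¬(v ∈ e ∧ v ∈ f)) := by
  intro a ha b hb hne v hv
  simp only [Finset.coe_union, Set.mem_union, Finset.mem_coe, Finset.coe_insert,
    Set.mem_insert_iff, Finset.coe_singleton, Set.mem_singleton_iff] at ha hb
  rcases ha with ha | rfl | rfl <;> rcases hb with hb | rfl | rfl
  · exact hE (by exact_mod_cast ha) (by exact_mod_cast hb) hne v hv
  · exact h1 a ha v hv
  · exact h2 a ha v hv
  · exact h1 b hb v ⟨hv.2, hv.1⟩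
  · exact hne rfl
  · exact h12 v hv
  · exact h2 b hb v ⟨hv.2, hv.1⟩
  · exact h12 v ⟨hv.2, hv.1⟩
  · exact hne rfl

lemma pw_union1 {V : Type*} [DecidableEq V] {E : Finset (Sym2 V)} {x₁ : Sym2 V}
    (hE : (E : Set (Sym2 V)).Pairwise fun e f => ∀ v, ¬(v ∈ e ∧ v ∈ f))
    (h1 : ∀ e ∈ E, ∀ v, ¬(v ∈ e ∧ v ∈ x₁)) :
    (((E ∪ {x₁} : Finset (Sym2 V)) : Set (Sym2 V)).Pairwise
      fun e f => ∀ v, ¬(v ∈ e ∧ v ∈ f)) := by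
  intro a ha b hb hne v hv
  simp only [Finset.coe_union, Set.mem_union, Finset.mem_coe,
    Finset.coe_singleton, Set.mem_singleton_iff] at ha hb
  rcases ha with ha | rfl <;> rcases hb with hb | rfl
  · exact hE (by exact_mod_cast ha) (by exact_mod_cast hb) hne v hv
  · exact h1 a ha v hv
  · exact h1 b hb v ⟨hv.2, hv.1⟩
  · exact hne rfl

lemma swap2_eq {α : Type*} [DecidableEq α] {M : Finset α} {e₁ e₂ x₁ x₂ : α}
    (h1 : e₁ ∈ M) (h2 : e₂ ∈ M) (g1 : x₁ ∉ M) (g2 : x₂ ∉ M) :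
    (((((M.erase e₁).erase e₂) ∪ {x₁, x₂}).erase x₁).erase x₂) ∪ {e₁, e₂} = M := by
  ext a
  by_cases ha1 : a = e₁ <;> by_cases ha2 : a = e₂ <;> by_cases hb1 : a = x₁ <;>
    by_cases hb2 : a = x₂ <;> simp_all

lemma swap1_eq {α : Type*} [DecidableEq α] {M : Finset α} {e₁ x₁ : α}
    (h1 : e₁ ∈ M) (g1 : x₁ ∉ M) :
    (((M.erase e₁) ∪ {x₁}).erase x₁) ∪ {e₁} = M := by
  ext a
  by_cases ha1 : a = e₁ <;> by_cases hb1 : a = x₁ <;> simp_all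

lemma card_swap2 {α : Type*} [DecidableEq α] {M : Finset α} {e₁ e₂ x₁ x₂ : α}
    (h1 : e₁ ∈ M) (h2 : e₂ ∈ M) (h12 : e₁ ≠ e₂) (g1 : x₁ ∉ M) (g2 : x₂ ∉ M)
    (g12 : x₁ ≠ x₂) : (((M.erase e₁).erase e₂) ∪ {x₁, x₂}).card = M.card := by
  have hd : Disjoint ((M.erase e₁).erase e₂) {x₁, x₂} := by
    rw [Finset.disjoint_left]
    intro a ha hx
    have haM : a ∈ M := Finset.mem_of_mem_erase (Finset.mem_of_mem_erase ha)
    rcases Finset.mem_insert.1 hx with rfl | hx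
    · exact g1 haM
    · exact g2 (Finset.mem_singleton.1 hx ▸ haM)
  have hcard2 : 1 < M.card := Finset.one_lt_card.2 ⟨e₁, h1, e₂, h2, h12⟩
  rw [Finset.card_union_of_disjoint hd, Finset.card_erase_of_mem
    (Finset.mem_erase.2 ⟨fun h => h12 h.symm, h2⟩), Finset.card_erase_of_mem h1,
    Finset.card_pair g12]
  omega

lemma card_swap1 {α : Type*} [DecidableEq α] {M : Finset α} {e₁ x₁ : α}
    (h1 : e₁ ∈ M) (g1 : x₁ ∉ M) : ((M.erase e₁) ∪ {x₁}).card = M.card := by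
  have hd : Disjoint (M.erase e₁) {x₁} := by
    rw [Finset.disjoint_left]
    intro a ha hx
    exact g1 (Finset.mem_singleton.1 hx ▸ Finset.mem_of_mem_erase ha)
  have hcard : 0 < M.card := Finset.card_pos.2 ⟨e₁, h1⟩
  rw [Finset.card_union_of_disjoint hd, Finset.card_erase_of_mem h1,
    Finset.card_singleton]
  omega

open scoped Classical in
noncomputable def decM (n m : ℕ) (o z w : Fin n) (M : Finset (Sym2 (Fin n))) :
    Finset (Sym2 (Fin n)) :=
  if s(o, z) ∈ M then
    if hc : ∃ q : Fin n × Fin n, q.1 ≠ o ∧ q.1.val < n - m ∧ n - m ≤ q.2.val ∧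
        q.2 ≠ z ∧ s(q.1, q.2) ∈ M then
      ((M.erase s(o, z)).erase s(hc.choose.1, hc.choose.2)) ∪
        {s(o, hc.choose.1), s(hc.choose.2, z)}
    else if hw : ∃ b : Fin n, b ≠ w ∧ s(w, b) ∈ M then
      ((M.erase s(o, z)).erase s(w, hw.choose)) ∪ {s(o, w), s(hw.choose, z)}
    else (M.erase s(o, z)) ∪ {s(w, z)}
  else if hb : ∃ b : Fin n, n - m ≤ b.val ∧ b ≠ w ∧ s(o, b) ∈ M then
    (M.erase s(o, hb.choose)) ∪ {s(hb.choose, z)}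
  else M

lemma key (n m : ℕ) (hm1 : 2 ≤ m) (hmn : m + m ≤ n) (o z w : Fin n)
    (hov : o.val = 0) (hzv : z.val = n - 1) (hwv : w.val = n - m)
    (M : Finset (Sym2 (Fin n))) (hsub : ↑M ⊆ (Kmk n m 1).edgeSet)
    (hpw : (M : Set (Sym2 (Fin n))).Pairwise fun e f => ∀ v, ¬(v ∈ e ∧ v ∈ f)) :
    ∃ M' : Finset (Sym2 (Fin n)), ↑M' ⊆ (Kstar n 1).edgeSet ∧ M'.card = M.card ∧
      ((M' : Set (Sym2 (Fin n))).Pairwise fun e f => ∀ v, ¬(v ∈ e ∧ v ∈ f)) ∧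
      decM n m o z w M' = M := by
  have hn4 : 4 ≤ n := by omega
  have memM : ∀ x y : Fin n, s(x, y) ∈ M → x ≠ y ∧
      ((x.val < n - m ∧ y.val < n - m) ∨ (n - m ≤ x.val ∧ n - m ≤ y.val) ∨
       (x.val = 0 ∧ y.val = n - m) ∨ (y.val = 0 ∧ x.val = n - m)) := by
    intro x y h
    have h2 := hsub (Finset.mem_coe.2 h)
    rwa [SimpleGraph.mem_edgeSet, kmk_adj] at h2
  have hAtZ : ∀ x : Fin n, s(x, z) ∈ M → n - m ≤ x.val ∧ x.val ≠ n - 1 ∧ x.val ≠ 0 := by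
    intro x h
    obtain ⟨hxy, hcl⟩ := memM x z h
    have hxz : x.val ≠ n - 1 := fun hh => hxy (Fin.val_injective (by rw [hh, hzv]))
    have := x.2
    rw [hzv] at hcl
    omega
  have hAtO : ∀ y : Fin n, s(o, y) ∈ M → y.val ≤ n - m ∧ y.val ≠ 0 := by
    intro y h
    obtain ⟨hxy, hcl⟩ := memM o y h
    have hy0 : y.val ≠ 0 := fun hh => hxy (Fin.val_injective (by rw [hh, hov]))
    rw [hov] at hcl
    omega
  have hCross : ∀ x y : Fin n, s(x, y) ∈ M → x.val ≠ 0 → y.val ≠ 0 →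
      ¬(x.val < n - m ∧ n - m ≤ y.val) := by
    intro x y h hx hy hc
    obtain ⟨hxy, hcl⟩ := memM x y h
    omega
  have toKstar : ∀ e : Sym2 (Fin n), e ∈ M → z ∉ e → e ∈ (Kstar n 1).edgeSet := by
    intro e
    induction e using Sym2.ind with
    | _ x y =>
      intro heM hze
      obtain ⟨hxy, hcl⟩ := memM x y heM
      rw [Sym2.mem_iff] at hze
      push_neg at hze
      have hx : x.val ≠ n - 1 := fun hh => hze.1 (Fin.val_injective (by rw [hzv, hh]))
      have hy : y.val ≠ n - 1 := fun hh => hze.2 (Fin.val_injective (by rw [hzv, hh]))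
      have := x.2
      have := y.2
      rw [SimpleGraph.mem_edgeSet, kstar_adj]
      exact ⟨hxy, Or.inl ⟨by omega, by omega⟩⟩
  by_cases hz1 : ∃ b : Fin n, s(b, z) ∈ M
  · obtain ⟨b, hbz⟩ := hz1
    obtain ⟨hbval, hbvz, hbv0⟩ := hAtZ b hbz
    by_cases ho1 : ∃ a : Fin n, s(o, a) ∈ M
    · -- Case 1 : z is matched to b, o is matched to a
      obtain ⟨a, hoa⟩ := ho1
      obtain ⟨haval, hav0⟩ := hAtO a hoa
      have hb2 := b.2
      have ha2 := a.2
      have hab : a ≠ b := by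
        intro h
        subst h
        have h2 := pw_eq hpw hoa hbz (v := a) (by simp) (by simp)
        simp only [Sym2.eq_iff, Fin.ext_iff, hov, hzv] at h2
        omega
      have haz : a ≠ z := fun hh => by rw [hh, hzv] at haval; omega
      have hao : a ≠ o := fun hh => hav0 (by rw [hh, hov])
      have hbo : b ≠ o := fun hh => hbv0 (by rw [hh, hov])
      have hbz' : b ≠ z := fun hh => hbvz (by rw [hh, hzv])
      have g1 : s(o, z) ∉ M := by
        intro hM
        have h2 := pw_eq hpw hM hbz (v := z) (by simp) (by simp)
        simp only [Sym2.eq_iff, Fin.ext_iff, hov, hzv] at h2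
        omega
      have g2 : s(a, b) ∉ M := by
        intro hM
        have h2 := pw_eq hpw hM hoa (v := a) (by simp) (by simp)
        simp only [Sym2.eq_iff, Fin.ext_iff, hov] at h2
        omega
      have hEsub : ∀ e ∈ (M.erase s(o, a)).erase s(b, z), e ∈ M :=
        fun e he => Finset.mem_of_mem_erase (Finset.mem_of_mem_erase he)
      have hEvert : ∀ e ∈ (M.erase s(o, a)).erase s(b, z),
          o ∉ e ∧ a ∉ e ∧ b ∉ e ∧ z ∉ e := by
        intro e he
        have heM := hEsub e he
        have hne1 : e ≠ s(b, z) := (Finset.mem_erase.1 he).1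
        have hne2 : e ≠ s(o, a) := (Finset.mem_erase.1 (Finset.mem_of_mem_erase he)).1
        refine ⟨fun hv => ?_, fun hv => ?_, fun hv => ?_, fun hv => ?_⟩
        · exact hne2 (pw_eq hpw heM hoa hv (by simp))
        · exact hne2 (pw_eq hpw heM hoa hv (by simp))
        · exact hne1 (pw_eq hpw heM hbz hv (by simp))
        · exact hne1 (pw_eq hpw heM hbz hv (by simp))
      refine ⟨((M.erase s(o, a)).erase s(b, z)) ∪ {s(o, z), s(a, b)}, ?_, ?_, ?_, ?_⟩
      · intro e he
        rcases Finset.mem_union.1 (Finset.mem_coe.1 he) with heE | hx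
        · exact toKstar e (hEsub e heE) (hEvert e heE).2.2.2
        · rcases Finset.mem_insert.1 hx with rfl | hx
          · rw [SimpleGraph.mem_edgeSet, kstar_adj]
            exact ⟨fun hh => by rw [hh, hzv] at hov; omega, Or.inr (Or.inl ⟨hov, hzv⟩)⟩
          · rw [Finset.mem_singleton] at hx
            subst hx
            rw [SimpleGraph.mem_edgeSet, kstar_adj]
            exact ⟨hab, Or.inl ⟨by omega, by omega⟩⟩
      · exact card_swap2 hoa hbz
          (by simp only [ne_eq, Sym2.eq_iff, Fin.ext_iff, hov, hzv]; omega) g1 g2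
          (by simp only [ne_eq, Sym2.eq_iff, Fin.ext_iff, hov, hzv]; omega)
      · refine pw_union2 (hpw.mono ?_) ?_ ?_ ?_
        · intro x hx
          exact Finset.mem_coe.2 (hEsub x (Finset.mem_coe.1 hx))
        · intro e he v hv
          rcases Sym2.mem_iff.1 hv.2 with rfl | rfl
          · exact (hEvert e he).1 hv.1
          · exact (hEvert e he).2.2.2 hv.1
        · intro e he v hv
          rcases Sym2.mem_iff.1 hv.2 with rfl | rfl
          · exact (hEvert e he).2.1 hv.1
          · exact (hEvert e he).2.2.1 hv.1
        · intro v hv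
          rcases Sym2.mem_iff.1 hv.1 with rfl | rfl <;>
          · have h2 := Sym2.mem_iff.1 hv.2
            simp only [Fin.ext_iff, hov, hzv] at h2
            omega
      · -- decoding
        have hmem : s(o, z) ∈ ((M.erase s(o, a)).erase s(b, z)) ∪ {s(o, z), s(a, b)} := by
          simp
        unfold decM
        rw [if_pos hmem]
        by_cases haw : a.val < n - m
        · have hc : ∃ q : Fin n × Fin n, q.1 ≠ o ∧ q.1.val < n - m ∧ n - m ≤ q.2.val ∧
              q.2 ≠ z ∧ s(q.1, q.2) ∈ ((M.erase s(o, a)).erase s(b, z)) ∪ {s(o, z), s(a, b)} :=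
            ⟨(a, b), hao, haw, hbval, hbz', by simp⟩
          rw [dif_pos hc]
          obtain ⟨hq1, hq2, hq3, hq4, hq5⟩ := hc.choose_spec
          have hq1v : hc.choose.1.val ≠ 0 := fun hh => hq1 (Fin.val_injective (by rw [hh, hov]))
          have hq4v : hc.choose.2.val ≠ n - 1 := fun hh => hq4 (Fin.val_injective (by rw [hh, hzv]))
          have hqeq : hc.choose = (a, b) := by
            rcases Finset.mem_union.1 hq5 with hqE | hqx
            · exfalso
              refine hCross _ _ (hEsub _ hqE) hq1v (by omega) ⟨hq2, hq3⟩
            · rcases Finset.mem_insert.1 hqx with heq | heq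
              · exfalso
                simp only [Sym2.eq_iff, Fin.ext_iff, hov, hzv] at heq
                omega
              · rw [Finset.mem_singleton, Sym2.eq_iff] at heq
                rcases heq with ⟨h1, h2⟩ | ⟨h1, h2⟩
                · exact Prod.ext h1 h2
                · exfalso
                  have := congrArg Fin.val h1
                  omega
          rw [hqeq]
          exact swap2_eq hoa hbz g1 g2
        · -- here a = w
          have haw' : a = w := Fin.val_injective (by rw [hwv]; omega)
          subst haw'
          have hc : ¬∃ q : Fin n × Fin n, q.1 ≠ o ∧ q.1.val < n - m ∧ n - m ≤ q.2.val ∧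
              q.2 ≠ z ∧ s(q.1, q.2) ∈ ((M.erase s(o, a)).erase s(b, z)) ∪ {s(o, z), s(a, b)} := by
            rintro ⟨q, hq1, hq2, hq3, hq4, hq5⟩
            have hq1v : q.1.val ≠ 0 := fun hh => hq1 (Fin.val_injective (by rw [hh, hov]))
            have hq4v : q.2.val ≠ n - 1 := fun hh => hq4 (Fin.val_injective (by rw [hh, hzv]))
            rcases Finset.mem_union.1 hq5 with hqE | hqx
            · exact hCross _ _ (hEsub _ hqE) hq1v (by omega) ⟨hq2, hq3⟩
            · rcases Finset.mem_insert.1 hqx with heq | heq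
              · simp only [Sym2.eq_iff, Fin.ext_iff, hov, hzv] at heq
                omega
              · rw [Finset.mem_singleton] at heq
                simp only [Sym2.eq_iff, Fin.ext_iff, hwv] at heq
                omega
          rw [dif_neg hc]
          have hw1 : ∃ b' : Fin n, b' ≠ a ∧ s(a, b') ∈
              ((M.erase s(o, a)).erase s(b, z)) ∪ {s(o, z), s(a, b)} :=
            ⟨b, fun hh => hab hh.symm, by simp⟩
          rw [dif_pos hw1]
          obtain ⟨hb1, hb2'⟩ := hw1.choose_spec
          have hbeq : hw1.choose = b := by
            rcases Finset.mem_union.1 hb2' with hqE | hqx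
            · exfalso
              have h2 := pw_eq hpw (hEsub _ hqE) hoa (v := a) (by simp) (by simp)
              exact (Finset.mem_erase.1 (Finset.mem_of_mem_erase hqE)).1 h2
            · rcases Finset.mem_insert.1 hqx with heq | heq
              · exfalso
                simp only [Sym2.eq_iff, Fin.ext_iff, hov, hzv, hwv] at heq
                omega
              · rw [Finset.mem_singleton, Sym2.eq_iff] at heq
                rcases heq with ⟨h1, h2⟩ | ⟨h1, h2⟩
                · exact h2
                · exact absurd h1 hab
          rw [hbeq]
          exact swap2_eq hoa hbz g1 g2
    · -- o is unmatched
      have hbo : b ≠ o := fun hh => hbv0 (by rw [hh, hov])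
      have hbz' : b ≠ z := fun hh => hbvz (by rw [hh, hzv])
      have hb2 := b.2
      have hEsub : ∀ e ∈ M.erase s(b, z), e ∈ M := fun e he => Finset.mem_of_mem_erase he
      have hEvert : ∀ e ∈ M.erase s(b, z), o ∉ e ∧ b ∉ e ∧ z ∉ e := by
        intro e he
        have heM := hEsub e he
        have hne1 : e ≠ s(b, z) := (Finset.mem_erase.1 he).1
        refine ⟨fun hv => ?_, fun hv => ?_, fun hv => ?_⟩
        · obtain ⟨u, rfl⟩ := Sym2.mem_iff_exists.1 hv
          exact ho1 ⟨u, heM⟩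
        · exact hne1 (pw_eq hpw heM hbz hv (by simp))
        · exact hne1 (pw_eq hpw heM hbz hv (by simp))
      by_cases hbw : b = w
      · -- Case 2 : z matched to w, o unmatched
        subst hbw
        have g1 : s(o, z) ∉ M := fun hM => ho1 ⟨z, hM⟩
        refine ⟨(M.erase s(b, z)) ∪ {s(o, z)}, ?_, card_swap1 hbz g1, ?_, ?_⟩
        · intro e he
          rcases Finset.mem_union.1 (Finset.mem_coe.1 he) with heE | hx
          · exact toKstar e (hEsub e heE) (hEvert e heE).2.2
          · rw [Finset.mem_singleton] at hx
            subst hx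
            rw [SimpleGraph.mem_edgeSet, kstar_adj]
            exact ⟨fun hh => by rw [hh, hzv] at hov; omega, Or.inr (Or.inl ⟨hov, hzv⟩)⟩
        · refine pw_union1 (hpw.mono ?_) ?_
          · intro x hx
            exact Finset.mem_coe.2 (hEsub x (Finset.mem_coe.1 hx))
          · intro e he v hv
            rcases Sym2.mem_iff.1 hv.2 with rfl | rfl
            · exact (hEvert e he).1 hv.1
            · exact (hEvert e he).2.2 hv.1
        · have hmem : s(o, z) ∈ (M.erase s(b, z)) ∪ {s(o, z)} := by simp
          unfold decM
          rw [if_pos hmem]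
          have hc : ¬∃ q : Fin n × Fin n, q.1 ≠ o ∧ q.1.val < n - m ∧ n - m ≤ q.2.val ∧
              q.2 ≠ z ∧ s(q.1, q.2) ∈ (M.erase s(b, z)) ∪ {s(o, z)} := by
            rintro ⟨q, hq1, hq2, hq3, hq4, hq5⟩
            have hq1v : q.1.val ≠ 0 := fun hh => hq1 (Fin.val_injective (by rw [hh, hov]))
            rcases Finset.mem_union.1 hq5 with hqE | hqx
            · exact hCross _ _ (hEsub _ hqE) hq1v (by omega) ⟨hq2, hq3⟩
            · rw [Finset.mem_singleton] at hqx
              simp only [Sym2.eq_iff, Fin.ext_iff, hov, hzv] at hqx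
              omega
          rw [dif_neg hc]
          have hw1 : ¬∃ b' : Fin n, b' ≠ b ∧ s(b, b') ∈ (M.erase s(b, z)) ∪ {s(o, z)} := by
            rintro ⟨b', hb1, hb2'⟩
            rcases Finset.mem_union.1 hb2' with hqE | hqx
            · have h2 := pw_eq hpw (hEsub _ hqE) hbz (v := b) (by simp) (by simp)
              exact (Finset.mem_erase.1 hqE).1 h2
            · rw [Finset.mem_singleton] at hqx
              simp only [Sym2.eq_iff, Fin.ext_iff, hov, hzv, hwv] at hqx
              omega
          rw [dif_neg hw1]
          exact swap1_eq hbz g1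
      · -- Case 3 : z matched to b ≠ w, o unmatched
        have hbvw : b.val ≠ n - m := fun hh => hbw (Fin.val_injective (by rw [hh, hwv]))
        have g1 : s(o, b) ∉ M := fun hM => ho1 ⟨b, hM⟩
        refine ⟨(M.erase s(b, z)) ∪ {s(o, b)}, ?_, card_swap1 hbz g1, ?_, ?_⟩
        · intro e he
          rcases Finset.mem_union.1 (Finset.mem_coe.1 he) with heE | hx
          · exact toKstar e (hEsub e heE) (hEvert e heE).2.2
          · rw [Finset.mem_singleton] at hx
            subst hx
            rw [SimpleGraph.mem_edgeSet, kstar_adj]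
            exact ⟨fun hh => hbv0 (by rw [← hh, hov]), Or.inl ⟨by omega, by omega⟩⟩
        · refine pw_union1 (hpw.mono ?_) ?_
          · intro x hx
            exact Finset.mem_coe.2 (hEsub x (Finset.mem_coe.1 hx))
          · intro e he v hv
            rcases Sym2.mem_iff.1 hv.2 with rfl | rfl
            · exact (hEvert e he).1 hv.1
            · exact (hEvert e he).2.1 hv.1
        · have hmem : s(o, z) ∉ (M.erase s(b, z)) ∪ {s(o, b)} := by
            intro hM
            rcases Finset.mem_union.1 hM with hqE | hqx
            · exact ho1 ⟨z, hEsub _ hqE⟩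
            · rw [Finset.mem_singleton] at hqx
              simp only [Sym2.eq_iff, Fin.ext_iff, hov, hzv] at hqx
              omega
          unfold decM
          rw [if_neg hmem]
          have hb' : ∃ b' : Fin n, n - m ≤ b'.val ∧ b' ≠ w ∧
              s(o, b') ∈ (M.erase s(b, z)) ∪ {s(o, b)} := ⟨b, hbval, hbw, by simp⟩
          rw [dif_pos hb']
          obtain ⟨hc1, hc2, hc3⟩ := hb'.choose_spec
          have hbeq : hb'.choose = b := by
            rcases Finset.mem_union.1 hc3 with hqE | hqx
            · exact absurd ⟨hb'.choose, hEsub _ hqE⟩ ho1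
            · rw [Finset.mem_singleton, Sym2.eq_iff] at hqx
              rcases hqx with ⟨h1, h2⟩ | ⟨h1, h2⟩
              · exact h2
              · exfalso
                have := congrArg Fin.val h1
                rw [hov] at this
                omega
          rw [hbeq]
          exact swap1_eq hbz g1
  · -- Case 4 : z unmatched
    refine ⟨M, ?_, rfl, hpw, ?_⟩
    · intro e he
      refine toKstar e (Finset.mem_coe.1 he) (fun hv => ?_)
      obtain ⟨u, hu⟩ := Sym2.mem_iff_exists.1 hv
      refine hz1 ⟨u, ?_⟩
      rw [Sym2.eq_swap] at hu
      rw [← hu]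
      exact Finset.mem_coe.1 he
    · have hmem : s(o, z) ∉ M := fun hM => hz1 ⟨o, hM⟩
      unfold decM
      rw [if_neg hmem]
      have hb' : ¬∃ b' : Fin n, n - m ≤ b'.val ∧ b' ≠ w ∧ s(o, b') ∈ M := by
        rintro ⟨b', h1, h2, h3⟩
        obtain ⟨h4, h5⟩ := hAtO b' h3
        exact h2 (Fin.val_injective (by rw [hwv]; omega))
      rw [dif_neg hb']

end Stmt14Aux

/-- For `2 ≤ m ≤ ⌊n/2⌋`: `m(K^1_{n-m,m},t) ≤ m(K^1_{n-1,1},t)` for all `t ≤ ⌊n/2⌋`. -/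
theorem stmt14 (n m : ℕ) (hm1 : 2 ≤ m) (hm2 : m ≤ n / 2) :
    ∀ t : ℕ, t ≤ n / 2 → matchCount (Kmk n m 1) t ≤ matchCount (Kstar n 1) t := by
  intro t _
  have hmn : m + m ≤ n := by omega
  have hn4 : 4 ≤ n := by omega
  rw [matchCount, matchCount]
  have H : ∀ s : {s : Finset (Sym2 (Fin n)) // ↑s ⊆ (Kmk n m 1).edgeSet ∧ s.card = t ∧
      (s : Set (Sym2 (Fin n))).Pairwise fun e f => ∀ v, ¬(v ∈ e ∧ v ∈ f)},
      ∃ M' : Finset (Sym2 (Fin n)), ↑M' ⊆ (Kstar n 1).edgeSet ∧ M'.card = s.1.card ∧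
        ((M' : Set (Sym2 (Fin n))).Pairwise fun e f => ∀ v, ¬(v ∈ e ∧ v ∈ f)) ∧
        Stmt14Aux.decM n m ⟨0, by omega⟩ ⟨n - 1, by omega⟩ ⟨n - m, by omega⟩ M' = s.1 :=
    fun s => Stmt14Aux.key n m hm1 hmn _ _ _ rfl rfl rfl s.1 s.2.1 s.2.2.2
  choose F h1 h2 h3 h4 using H
  apply Nat.card_le_card_of_injective
    (f := fun s => ⟨F s, h1 s, by rw [h2 s]; exact s.2.2.1, h3 s⟩)
  intro s₁ s₂ h
  have h' : F s₁ = F s₂ := congrArg Subtype.val h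
  apply Subtype.ext
  rw [← h4 s₁, ← h4 s₂, h']
end
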